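/- arXiv:0801.0270 — 5 statements merged into one kernel-verified Lean document; each statement's English description precedes it below -/
import Mathlib

section
/- For every n ≥ 3 there exists an edge-coloring of the complete bipartite graph K(n,n) with 3 colors in which every vertex has color degree 3 and such that the vertex set of K(n,n) cannot be partitioned into fewer than 3 vertex-disjoint monochromatic trees. -/
/-!
Common definitions for edge-colored complete bipartite graphs.

The complete bipartite graph `K(A,B)` with partite sets `α` and `β` is modeled on the
vertex type `α ⊕ β`; an edge-coloring with color type `γ` is a function `c : α → β → γ`
(giving the color of the edge between `a : α` and `b : β`).
-/

/-- The spanning subgraph of the complete bipartite graph on parts `α`, `β` consisting of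
the edges of color `k`, under the edge-coloring `c`. -/
def biColorGraph {α β γ : Type*} (c : α → β → γ) (k : γ) : SimpleGraph (α ⊕ β) where
  Adj x y := (∃ a b, x = Sum.inl a ∧ y = Sum.inr b ∧ c a b = k) ∨
             (∃ a b, x = Sum.inr b ∧ y = Sum.inl a ∧ c a b = k)
  symm := by
    constructor
    rintro x y (⟨a, b, hx, hy, hc⟩ | ⟨a, b, hx, hy, hc⟩)
    · exact Or.inr ⟨a, b, hy, hx, hc⟩
    · exact Or.inl ⟨a, b, hy, hx, hc⟩
  loopless := by
    constructor
    rintro x (⟨a, b, hx, hy, _⟩ | ⟨a, b, hx, hy, _⟩) <;> subst hx <;> simp at hy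

/-- `S` is the vertex set of a monochromatic tree: it induces a connected subgraph in some
color class.  (A single vertex also counts as a monochromatic tree.) -/
def IsMonoTreeSet {α β γ : Type*} (c : α → β → γ) (S : Set (α ⊕ β)) : Prop :=
  ∃ k, ((biColorGraph c k).induce S).Connected

/-- `P` is a partition of the vertex set of the complete bipartite graph into
(nonempty, pairwise vertex-disjoint) vertex sets of monochromatic trees. -/
def IsMonoTreePartition {α β γ : Type*} (c : α → β → γ) (P : Finset (Set (α ⊕ β))) : Prop :=
  (∀ S ∈ P, IsMonoTreeSet c S) ∧ ∀ x : α ⊕ β, ∃! S, S ∈ P ∧ x ∈ S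

/-- The vertex set can be partitioned into at most `m` vertex-disjoint monochromatic trees. -/
def HasMonoTreePartition {α β γ : Type*} (c : α → β → γ) (m : ℕ) : Prop :=
  ∃ P : Finset (Set (α ⊕ β)), IsMonoTreePartition c P ∧ P.card ≤ m

/-- Every vertex has color degree 3, i.e. all three colors appear on its incident edges. -/
def ColorDegreeThree {α β : Type*} (c : α → β → Fin 3) : Prop :=
  (∀ (a : α) (k : Fin 3), ∃ b, c a b = k) ∧ ∀ (b : β) (k : Fin 3), ∃ a, c a b = k

/-! For 2-edge-colorings we use `Bool` as the color type: `true` = blue, `false` = green. -/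

/-- The vertices of `α` all of whose incident edges are blue. -/
def XA {α β : Type*} (c : α → β → Bool) : Set α := {a | ∀ b, c a b = true}

/-- The vertices of `α` all of whose incident edges are green. -/
def YA {α β : Type*} (c : α → β → Bool) : Set α := {a | ∀ b, c a b = false}

/-- The vertices of `β` all of whose incident edges are blue. -/
def XB {α β : Type*} (c : α → β → Bool) : Set β := {b | ∀ a, c a b = true}

/-- The vertices of `β` all of whose incident edges are green. -/
def YB {α β : Type*} (c : α → β → Bool) : Set β := {b | ∀ a, c a b = false}

/-- `S`-type graph: `X(G) ≠ ∅` and `Y(G) ≠ ∅`. -/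
def IsSType {α β : Type*} (c : α → β → Bool) : Prop :=
  ((XA c).Nonempty ∨ (XB c).Nonempty) ∧ ((YA c).Nonempty ∨ (YB c).Nonempty)

/-- `M`-type graph: there are partitions `A = A1 ∪ A1ᶜ`, `B = B1 ∪ B1ᶜ` with all four parts
nonempty such that `K(A1,B1)` and `K(A1ᶜ,B1ᶜ)` are blue and `K(A1,B1ᶜ)`, `K(A1ᶜ,B1)`
are green. -/
def IsMType {α β : Type*} (c : α → β → Bool) : Prop :=
  ∃ (A1 : Set α) (B1 : Set β),
    A1.Nonempty ∧ A1ᶜ.Nonempty ∧ B1.Nonempty ∧ B1ᶜ.Nonempty ∧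
    (∀ a ∈ A1, ∀ b ∈ B1, c a b = true) ∧
    (∀ a ∈ A1ᶜ, ∀ b ∈ B1ᶜ, c a b = true) ∧
    (∀ a ∈ A1, ∀ b ∈ B1ᶜ, c a b = false) ∧
    (∀ a ∈ A1ᶜ, ∀ b ∈ B1, c a b = false)

/-- For a subset `Bi ⊆ B`, the set `b(Bi) ⊆ A` of vertices sending blue edges to all of `Bi`
and green edges to all of `Biᶜ`.  (Thus `b(B̄i) = bsetA c Biᶜ`.) -/
def bsetA {α β : Type*} (c : α → β → Bool) (Bi : Set β) : Set α :=
  {a | (∀ b ∈ Bi, c a b = true) ∧ ∀ b ∈ Biᶜ, c a b = false}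

/-- For a subset `Ai ⊆ A`, the set `b(Ai) ⊆ B` of vertices sending blue edges to all of `Ai`
and green edges to all of `Aiᶜ`. -/
def bsetB {α β : Type*} (c : α → β → Bool) (Ai : Set α) : Set β :=
  {b | (∀ a ∈ Ai, c a b = true) ∧ ∀ a ∈ Aiᶜ, c a b = false}

/-- `S1*`-type graph with `X(G) ∪ Y(G) ⊆ A`: `|B| = 1`, `|A1| ≥ 2` and `|A3| ≥ 2`
(where `A1 = X(G)`, `A3 = Y(G)`). -/
def IsS1StarA {α β : Type*} [Fintype β] (c : α → β → Bool) : Prop :=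
  Fintype.card β = 1 ∧ 2 ≤ (XA c).ncard ∧ 2 ≤ (YA c).ncard

/-- `S1'`-type graph with `X(G) ∪ Y(G) ⊆ A`: `|A1| ≥ 2`, `|A3| ≥ 2`, `|B| ≥ 2`, and for
every partition `B = Bi ∪ B̄i` into nonempty parts, `b(Bi) ≠ ∅` and `b(B̄i) ≠ ∅`. -/
def IsS1PrimeA {α β : Type*} [Fintype β] (c : α → β → Bool) : Prop :=
  2 ≤ (XA c).ncard ∧ 2 ≤ (YA c).ncard ∧ 2 ≤ Fintype.card β ∧
  ∀ Bi : Set β, Bi.Nonempty → Biᶜ.Nonempty →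
    (bsetA c Bi).Nonempty ∧ (bsetA c Biᶜ).Nonempty

/-- `S1*`-type graph with `X(G) ∪ Y(G) ⊆ B`. -/
def IsS1StarB {α β : Type*} [Fintype α] (c : α → β → Bool) : Prop :=
  Fintype.card α = 1 ∧ 2 ≤ (XB c).ncard ∧ 2 ≤ (YB c).ncard

/-- `S1'`-type graph with `X(G) ∪ Y(G) ⊆ B`. -/
def IsS1PrimeB {α β : Type*} [Fintype α] (c : α → β → Bool) : Prop :=
  2 ≤ (XB c).ncard ∧ 2 ≤ (YB c).ncard ∧ 2 ≤ Fintype.card α ∧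
  ∀ Ai : Set α, Ai.Nonempty → Aiᶜ.Nonempty →
    (bsetB c Ai).Nonempty ∧ (bsetB c Aiᶜ).Nonempty

/-- `S1`-type graph: `S1*`-type or `S1'`-type. -/
def IsS1 {α β : Type*} [Fintype α] [Fintype β] (c : α → β → Bool) : Prop :=
  IsS1StarA c ∨ IsS1PrimeA c ∨ IsS1StarB c ∨ IsS1PrimeB c

/-- `S2`-type graph: an `S`-type graph that is not `S1`-type. -/
def IsS2 {α β : Type*} [Fintype α] [Fintype β] (c : α → β → Bool) : Prop :=
  IsSType c ∧ ¬ IsS1 c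

/-- Invariant function: constant on monochromatic connected sets for `c a b = (a+b) % 3`. -/
private def rfun {n : ℕ} (k : Fin 3) : (Fin n ⊕ Fin n) → ℕ
  | Sum.inl a => a.val % 3
  | Sum.inr b => (k.val + 2 * b.val) % 3

private lemma rfun_const {n : ℕ} (c : Fin n → Fin n → Fin 3)
    (hc : ∀ a b, (c a b).val = (a.val + b.val) % 3)
    (k : Fin 3) (S : Set (Fin n ⊕ Fin n))
    (hS : ((biColorGraph c k).induce S).Connected)
    (x y : S) : rfun k x.val = rfun k y.val := by
  obtain ⟨w⟩ := hS.preconnected x y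
  induction w with
  | nil => rfl
  | cons h p ih =>
    refine Eq.trans ?_ ih
    rename_i u v _
    have h' : (biColorGraph c k).Adj u.val v.val := h
    have hk := k.isLt
    rcases h' with ⟨a, b, hx, hy, hcab⟩ | ⟨a, b, hx, hy, hcab⟩ <;>
    · have hab := hc a b
      rw [hcab] at hab
      rw [hx, hy]
      simp only [rfun]
      omega

/-- For every `n ≥ 3` there is a 3-edge-coloring of `K(n,n)` in which every
vertex has color degree 3 and whose vertex set cannot be partitioned into fewer than 3
vertex-disjoint monochromatic trees. -/
theorem exists_three_colored_Knn_needing_three_trees (n : ℕ) (hn : 3 ≤ n) :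
    ∃ c : Fin n → Fin n → Fin 3, ColorDegreeThree c ∧ ¬ HasMonoTreePartition c 2 := by
  classical
  set c : Fin n → Fin n → Fin 3 :=
    fun a b => ⟨(a.val + b.val) % 3, Nat.mod_lt _ (by norm_num)⟩ with hcdef
  have hc : ∀ a b, (c a b).val = (a.val + b.val) % 3 := fun a b => rfl
  refine ⟨c, ⟨?_, ?_⟩, ?_⟩
  · intro a k
    refine ⟨⟨(k.val + 2 * a.val) % 3, lt_of_lt_of_le (Nat.mod_lt _ (by norm_num)) hn⟩, ?_⟩
    have hk := k.isLt
    apply Fin.ext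
    rw [hc]
    simp only []
    omega
  · intro b k
    refine ⟨⟨(k.val + 2 * b.val) % 3, lt_of_lt_of_le (Nat.mod_lt _ (by norm_num)) hn⟩, ?_⟩
    have hk := k.isLt
    apply Fin.ext
    rw [hc]
    simp only []
    omega
  · rintro ⟨P, ⟨hmono, hpart⟩, hcard⟩
    set v : Fin 3 → Fin n ⊕ Fin n :=
      fun i => Sum.inl ⟨i.val, lt_of_lt_of_le i.isLt hn⟩ with hvdef
    have key : ∀ (i j : Fin 3) (S : Set (Fin n ⊕ Fin n)), S ∈ P →
        v i ∈ S → v j ∈ S → i = j := by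
      intro i j S hSP hiS hjS
      obtain ⟨k, hconn⟩ := hmono S hSP
      have := rfun_const c hc k S hconn ⟨v i, hiS⟩ ⟨v j, hjS⟩
      simp only [hvdef, rfun] at this
      have hi := i.isLt; have hj := j.isLt
      exact Fin.ext (by omega)
    obtain ⟨S0, ⟨hS0P, hS0v⟩, -⟩ := hpart (v 0)
    obtain ⟨S1, ⟨hS1P, hS1v⟩, -⟩ := hpart (v 1)
    obtain ⟨S2, ⟨hS2P, hS2v⟩, -⟩ := hpart (v 2)
    by_cases h01 : S0 = S1
    · exact absurd (key 0 1 S0 hS0P hS0v (h01 ▸ hS1v)) (by decide)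
    by_cases h02 : S0 = S2
    · exact absurd (key 0 2 S0 hS0P hS0v (h02 ▸ hS2v)) (by decide)
    by_cases h12 : S1 = S2
    · exact absurd (key 1 2 S1 hS1P hS1v (h12 ▸ hS2v)) (by decide)
    have hsub : ({S0, S1, S2} : Finset (Set (Fin n ⊕ Fin n))) ⊆ P := by
      intro S hS
      simp only [Finset.mem_insert, Finset.mem_singleton] at hS
      rcases hS with h | h | h <;> subst h <;> assumption
    have hle := Finset.card_le_card hsub
    rw [Finset.card_insert_of_notMem (by simp [h01, h02]),
        Finset.card_insert_of_notMem (by simp [h12]),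
        Finset.card_singleton] at hle
    omega
end

section
/- Let K(m,n) be a complete bipartite graph whose edges are colored with two colors, blue and green. Then K(m,n) has a monochromatic spanning tree if and only if K(m,n) is neither an S-type graph nor an M-type graph. -/
section Aux

variable {α β : Type*}

lemma bool_ne_iff {x k : Bool} : x ≠ k ↔ x = !k := by cases x <;> cases k <;> simp

lemma adj_lr {c : α → β → Bool} {k : Bool} {a : α} {b : β} (h : c a b = k) :
    (biColorGraph c k).Adj (Sum.inl a) (Sum.inr b) :=
  Or.inl ⟨a, b, rfl, rfl, h⟩

lemma reach_lr {c : α → β → Bool} {k : Bool} {a : α} {b : β} (h : c a b = k) :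
    (biColorGraph c k).Reachable (Sum.inl a) (Sum.inr b) :=
  (adj_lr h).reachable

lemma connected_of_root {V : Type*} [Nonempty V] {G : SimpleGraph V} (r : V)
    (h : ∀ v, G.Reachable r v) : G.Connected :=
  ⟨fun u v => (h u).symm.trans (h v)⟩

lemma no_adj_inl {c : α → β → Bool} {k : Bool} {a : α} (h : ∀ b, c a b ≠ k) :
    ∀ y, ¬ (biColorGraph c k).Adj (Sum.inl a) y := by
  rintro y (⟨a', b, h1, h2, h3⟩ | ⟨a', b, h1, h2, h3⟩)
  · cases h1; exact h _ h3
  · simp at h1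

lemma no_adj_inr {c : α → β → Bool} {k : Bool} {b : β} (h : ∀ a, c a b ≠ k) :
    ∀ y, ¬ (biColorGraph c k).Adj (Sum.inr b) y := by
  rintro y (⟨a', b', h1, h2, h3⟩ | ⟨a', b', h1, h2, h3⟩)
  · simp at h1
  · cases h1; exact h _ h3

lemma not_reachable_of_isolated {V : Type*} {G : SimpleGraph V} {u v : V}
    (h : ∀ y, ¬ G.Adj u y) (hne : u ≠ v) : ¬ G.Reachable u v := by
  rintro ⟨w⟩
  cases w with
  | nil => exact hne rfl
  | cons hadj _ => exact h _ hadj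

lemma reach_inv {V : Type*} {G : SimpleGraph V} (P : V → Prop)
    (h : ∀ {x y}, G.Adj x y → (P x ↔ P y)) {u v : V} (hr : G.Reachable u v) :
    P u ↔ P v := by
  obtain ⟨w⟩ := hr
  induction w with
  | nil => exact Iff.rfl
  | cons hadj _ ih => exact (h hadj).trans ih

/-- Key lemma: if every vertex has an incident edge of color `k` but neither color class
is connected, then the coloring has the `M`-structure with "blue" = `k`. -/
lemma key_lemma [Nonempty α] [Nonempty β] (c : α → β → Bool) (k : Bool)
    (hA : ∀ a, ∃ b, c a b = k) (hB : ∀ b, ∃ a, c a b = k)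
    (hk : ¬ (biColorGraph c k).Connected) (hk' : ¬ (biColorGraph c (!k)).Connected) :
    ∃ (A1 : Set α) (B1 : Set β), A1.Nonempty ∧ A1ᶜ.Nonempty ∧ B1.Nonempty ∧ B1ᶜ.Nonempty ∧
      (∀ a ∈ A1, ∀ b ∈ B1, c a b = k) ∧ (∀ a ∈ A1ᶜ, ∀ b ∈ B1ᶜ, c a b = k) ∧
      (∀ a ∈ A1, ∀ b ∈ B1ᶜ, c a b = !k) ∧ (∀ a ∈ A1ᶜ, ∀ b ∈ B1, c a b = !k) := by
  classical
  obtain ⟨a0⟩ := ‹Nonempty α›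
  set G := biColorGraph c k with hG
  set A1 : Set α := {a | G.Reachable (Sum.inl a0) (Sum.inl a)} with hA1def
  set B1 : Set β := {b | G.Reachable (Sum.inl a0) (Sum.inr b)} with hB1def
  have hka : k ≠ !k := by cases k <;> simp
  -- cross edges are the other color
  have hcross1 : ∀ a ∈ A1, ∀ b ∈ B1ᶜ, c a b = !k := by
    intro a ha b hb
    rw [← bool_ne_iff]
    intro hc
    exact hb (ha.trans (reach_lr hc))
  have hcross2 : ∀ a ∈ A1ᶜ, ∀ b ∈ B1, c a b = !k := by
    intro a ha b hb
    rw [← bool_ne_iff]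
    intro hc
    exact ha (hb.trans (reach_lr hc).symm)
  -- nonemptiness
  have hA1 : A1.Nonempty := ⟨a0, SimpleGraph.Reachable.refl _⟩
  have hB1 : B1.Nonempty := by
    obtain ⟨b, hb⟩ := hA a0
    exact ⟨b, reach_lr hb⟩
  have hone : A1ᶜ.Nonempty ∨ B1ᶜ.Nonempty := by
    by_contra h
    push_neg at h
    obtain ⟨h1, h2⟩ := h
    rw [Set.compl_empty_iff] at h1 h2
    apply hk
    apply connected_of_root (Sum.inl a0)
    rintro (a | b)
    · exact Set.eq_univ_iff_forall.mp h1 a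
    · exact Set.eq_univ_iff_forall.mp h2 b
  have hAc : A1ᶜ.Nonempty := by
    rcases hone with h | ⟨b, hb⟩
    · exact h
    · obtain ⟨a, ha⟩ := hB b
      refine ⟨a, fun haA => ?_⟩
      exact hb (haA.trans (reach_lr ha))
  have hBc : B1ᶜ.Nonempty := by
    obtain ⟨a, ha⟩ := hAc
    obtain ⟨b, hb⟩ := hA a
    refine ⟨b, fun hbB => ?_⟩
    exact ha (hbB.trans (reach_lr hb).symm)
  -- inner edges are color k
  have claim1 : ∀ a ∈ A1, ∀ b ∈ B1, c a b = k := by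
    by_contra h
    push_neg at h
    obtain ⟨a1, ha1, b1, hb1, hne⟩ := h
    rw [bool_ne_iff] at hne
    apply hk'
    apply connected_of_root (Sum.inl a1)
    have hb1' : (biColorGraph c (!k)).Reachable (Sum.inl a1) (Sum.inr b1) := reach_lr hne
    have hreachAc : ∀ a ∈ A1ᶜ, (biColorGraph c (!k)).Reachable (Sum.inl a1) (Sum.inl a) :=
      fun a ha => hb1'.trans (reach_lr (hcross2 a ha b1 hb1)).symm
    have hreachBc : ∀ b ∈ B1ᶜ, (biColorGraph c (!k)).Reachable (Sum.inl a1) (Sum.inr b) :=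
      fun b hb => reach_lr (hcross1 a1 ha1 b hb)
    rintro (a | b)
    · by_cases haA : a ∈ A1
      · obtain ⟨b', hb'⟩ := hBc
        exact (hreachBc b' hb').trans (reach_lr (hcross1 a haA b' hb')).symm
      · exact hreachAc a haA
    · by_cases hbB : b ∈ B1
      · obtain ⟨a', ha'⟩ := hAc
        exact (hreachAc a' ha').trans (reach_lr (hcross2 a' ha' b hbB))
      · exact hreachBc b hbB
  have claim2 : ∀ a ∈ A1ᶜ, ∀ b ∈ B1ᶜ, c a b = k := by
    by_contra h
    push_neg at h
    obtain ⟨a2, ha2, b2, hb2, hne⟩ := h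
    rw [bool_ne_iff] at hne
    apply hk'
    apply connected_of_root (Sum.inl a2)
    have hb2' : (biColorGraph c (!k)).Reachable (Sum.inl a2) (Sum.inr b2) := reach_lr hne
    have hreachA : ∀ a ∈ A1, (biColorGraph c (!k)).Reachable (Sum.inl a2) (Sum.inl a) :=
      fun a ha => hb2'.trans (reach_lr (hcross1 a ha b2 hb2)).symm
    have hreachB : ∀ b ∈ B1, (biColorGraph c (!k)).Reachable (Sum.inl a2) (Sum.inr b) :=
      fun b hb => reach_lr (hcross2 a2 ha2 b hb)
    rintro (a | b)
    · by_cases haA : a ∈ A1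
      · exact hreachA a haA
      · obtain ⟨b', hb'⟩ := hB1
        exact (hreachB b' hb').trans (reach_lr (hcross2 a haA b' hb')).symm
    · by_cases hbB : b ∈ B1
      · exact hreachB b hbB
      · obtain ⟨a', ha'⟩ := hA1
        exact (hreachA a' ha').trans (reach_lr (hcross1 a' ha' b hbB))
  exact ⟨A1, B1, hA1, hAc, hB1, hBc, claim1, claim2, hcross1, hcross2⟩

end Aux

/-- **Lemma 1.** A 2-edge-colored complete bipartite graph has a monochromatic
spanning tree if and only if it is neither an `S`-type graph nor an `M`-type graph. -/
theorem mono_spanning_tree_iff_not_S_not_M {α β : Type*} [Fintype α] [Fintype β]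
    [Nonempty α] [Nonempty β] (c : α → β → Bool) :
    (∃ k, (biColorGraph c k).Connected) ↔ ¬ IsSType c ∧ ¬ IsMType c := by
  classical
  constructor
  · rintro ⟨k, hconn⟩
    constructor
    · rintro ⟨hX, hY⟩
      have : ∃ v : α ⊕ β, ∀ y, ¬ (biColorGraph c k).Adj v y := by
        cases k with
        | false =>
          rcases hX with ⟨a, ha⟩ | ⟨b, hb⟩
          · exact ⟨Sum.inl a, no_adj_inl (fun b => by simp [ha b])⟩
          · exact ⟨Sum.inr b, no_adj_inr (fun a => by simp [hb a])⟩
        | true =>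
          rcases hY with ⟨a, ha⟩ | ⟨b, hb⟩
          · exact ⟨Sum.inl a, no_adj_inl (fun b => by simp [ha b])⟩
          · exact ⟨Sum.inr b, no_adj_inr (fun a => by simp [hb a])⟩
      obtain ⟨v, hv⟩ := this
      obtain ⟨a0⟩ := ‹Nonempty α›
      obtain ⟨b0⟩ := ‹Nonempty β›
      cases v with
      | inl a =>
        exact not_reachable_of_isolated hv (Sum.inl_ne_inr)
          (hconn.preconnected (Sum.inl a) (Sum.inr b0))
      | inr b =>
        exact not_reachable_of_isolated hv (Sum.inr_ne_inl)
          (hconn.preconnected (Sum.inr b) (Sum.inl a0))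
    · rintro ⟨A1, B1, ⟨a, ha⟩, ⟨a', ha'⟩, hB1, hB1c, h11, h22, h12, h21⟩
      have hr := hconn.preconnected (Sum.inl a) (Sum.inl a')
      cases k with
      | true =>
        have := reach_inv (Sum.elim (· ∈ A1) (· ∈ B1)) (fun {x y} hxy => by
          rcases hxy with ⟨a1, b1, hx, hy, hc⟩ | ⟨a1, b1, hx, hy, hc⟩ <;> subst hx <;> subst hy
          · simp only [Sum.elim_inl, Sum.elim_inr]
            constructor
            · intro h1; by_contra h2; have := h12 a1 h1 b1 h2; simp_all
            · intro h1; by_contra h2; have := h21 a1 h2 b1 h1; simp_all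
          · simp only [Sum.elim_inl, Sum.elim_inr]
            constructor
            · intro h1; by_contra h2; have := h21 a1 h2 b1 h1; simp_all
            · intro h1; by_contra h2; have := h12 a1 h1 b1 h2; simp_all) hr
        simp only [Sum.elim_inl] at this
        exact ha' (this.mp ha)
      | false =>
        have := reach_inv (Sum.elim (· ∈ A1) (· ∈ B1ᶜ)) (fun {x y} hxy => by
          rcases hxy with ⟨a1, b1, hx, hy, hc⟩ | ⟨a1, b1, hx, hy, hc⟩ <;> subst hx <;> subst hy
          · simp only [Sum.elim_inl, Sum.elim_inr]
            constructor
            · intro h1; by_contra h2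
              have h2' : b1 ∈ B1 := not_not.mp h2
              have := h11 a1 h1 b1 h2'; simp_all
            · intro h1; by_contra h2; have := h22 a1 h2 b1 h1; simp_all
          · simp only [Sum.elim_inl, Sum.elim_inr]
            constructor
            · intro h1; by_contra h2; have := h22 a1 h2 b1 h1; simp_all
            · intro h1; by_contra h2
              have h2' : b1 ∈ B1 := not_not.mp h2
              have := h11 a1 h1 b1 h2'; simp_all) hr
        simp only [Sum.elim_inl] at this
        exact ha' (this.mp ha)
  · rintro ⟨hS, hM⟩
    by_contra h
    push_neg at h
    rw [IsSType, not_and_or] at hS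
    rcases hS with hX | hY
    · -- X(G) = ∅ : every vertex has a green (false) edge
      push_neg at hX
      obtain ⟨hXA, hXB⟩ := hX
      have hA : ∀ a, ∃ b, c a b = false := by
        intro a
        by_contra hc
        push_neg at hc
        exact (Set.eq_empty_iff_forall_notMem.mp hXA a)
          (fun b => by simpa using hc b)
      have hB : ∀ b, ∃ a, c a b = false := by
        intro b
        by_contra hc
        push_neg at hc
        exact (Set.eq_empty_iff_forall_notMem.mp hXB b)
          (fun a => by simpa using hc a)
      obtain ⟨A1, B1, h1, h2, h3, h4, h11, h22, h12, h21⟩ :=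
        key_lemma c false hA hB (h false) (h true)
      simp only [Bool.not_false] at h12 h21
      exact hM ⟨A1, B1ᶜ, h1, h2, h4, by simpa using h3, h12,
        by simpa using h21, by simpa using h11, h22⟩
    · -- Y(G) = ∅ : every vertex has a blue (true) edge
      push_neg at hY
      obtain ⟨hYA, hYB⟩ := hY
      have hA : ∀ a, ∃ b, c a b = true := by
        intro a
        by_contra hc
        push_neg at hc
        exact (Set.eq_empty_iff_forall_notMem.mp hYA a)
          (fun b => by simpa using hc b)
      have hB : ∀ b, ∃ a, c a b = true := by
        intro b
        by_contra hc
        push_neg at hc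
        exact (Set.eq_empty_iff_forall_notMem.mp hYB b)
          (fun a => by simpa using hc a)
      obtain ⟨A1, B1, h1, h2, h3, h4, h11, h22, h12, h21⟩ :=
        key_lemma c true hA hB (h true) (h false)
      simp only [Bool.not_true] at h12 h21
      exact hM ⟨A1, B1, h1, h2, h3, h4, h11, h22, h12, h21⟩
end

section
/- Let K(A,B) be a complete bipartite graph whose edges are colored with two colors, blue and green. If K(A,B) is an S2-type graph, then the vertex set of K(A,B) can be partitioned into either an isolated vertex together with one monochromatic tree, or two vertex-disjoint monochromatic trees of different colors. Moreover, writing A = A1 ∪ A2 ∪ A3 (respectively B = B1 ∪ B2 ∪ B3) for the partite set containing X(G) ∪ Y(G), except in the case min{|A1|,|A3|} = 1 (respectively min{|B1|,|B3|} = 1), the vertex set of K(A,B) can always be partitioned into two vertex-disjoint monochromatic trees of different colors. -/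
section Lemma3Helpers

variable {α β : Type*}

lemma biAdj_lr (c : α → β → Bool) (k : Bool) {a : α} {b : β} (h : c a b = k) :
    (biColorGraph c k).Adj (Sum.inl a) (Sum.inr b) :=
  Or.inl ⟨a, b, rfl, rfl, h⟩

lemma biAdj_rl (c : α → β → Bool) (k : Bool) {a : α} {b : β} (h : c a b = k) :
    (biColorGraph c k).Adj (Sum.inr b) (Sum.inl a) :=
  Or.inr ⟨a, b, rfl, rfl, h⟩

lemma induce_connected_hub {V : Type*} (G : SimpleGraph V) (S : Set V) (h : V) (hh : h ∈ S)
    (H : ∀ v ∈ S, v = h ∨ G.Adj v h ∨ ∃ w ∈ S, G.Adj v w ∧ G.Adj w h) :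
    (G.induce S).Connected := by
  rw [SimpleGraph.connected_iff]
  have key : ∀ v : S, (G.induce S).Reachable v ⟨h, hh⟩ := by
    rintro ⟨v, hv⟩
    rcases H v hv with rfl | hadj | ⟨w, hw, h1, h2⟩
    · exact SimpleGraph.Reachable.refl _
    · exact SimpleGraph.Adj.reachable hadj
    · exact SimpleGraph.Reachable.trans
        (SimpleGraph.Adj.reachable (G := G.induce S) (u := ⟨v, hv⟩) (v := ⟨w, hw⟩) h1)
        (SimpleGraph.Adj.reachable h2)
  exact ⟨fun u v => (key u).trans (key v).symm, ⟨⟨h, hh⟩⟩⟩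

lemma twoTreeA (c : α → β → Bool)
    (hX : (XA c).Nonempty) (hY : (YA c).Nonempty)
    (Bi : Set β) (hBc : Biᶜ.Nonempty) (hb : bsetA c Bi = ∅) :
    ∃ S : Set (α ⊕ β), ((biColorGraph c true).induce S).Connected ∧
      ((biColorGraph c false).induce Sᶜ).Connected := by
  obtain ⟨x, hx⟩ := hX
  obtain ⟨y, hy⟩ := hY
  refine ⟨{z | Sum.elim (fun a => ∃ b ∈ Biᶜ, c a b = true) (fun b => b ∈ Biᶜ) z}, ?_, ?_⟩
  · obtain ⟨b0, hb0⟩ := hBc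
    apply induce_connected_hub _ _ (Sum.inl x)
      (by simp only [Set.mem_setOf_eq, Sum.elim_inl]; exact ⟨b0, hb0, hx b0⟩)
    rintro (a | b) hv
    · simp only [Set.mem_setOf_eq, Sum.elim_inl] at hv
      obtain ⟨b, hb1, hb2⟩ := hv
      exact Or.inr (Or.inr ⟨Sum.inr b, hb1, biAdj_lr c true hb2, biAdj_rl c true (hx b)⟩)
    · simp only [Set.mem_setOf_eq, Sum.elim_inr] at hv
      exact Or.inr (Or.inl (biAdj_rl c true (hx b)))
  · have hyS : Sum.inl y ∈
        ({z | Sum.elim (fun a => ∃ b ∈ Biᶜ, c a b = true) (fun b => b ∈ Biᶜ) z} : Set (α ⊕ β))ᶜ := by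
      simp only [Set.mem_compl_iff, Set.mem_setOf_eq, Sum.elim_inl, not_exists, not_and]
      intro b _ hcb
      rw [hy b] at hcb
      exact Bool.noConfusion hcb
    apply induce_connected_hub _ _ (Sum.inl y) hyS
    rintro (a | b) hv
    · simp only [Set.mem_compl_iff, Set.mem_setOf_eq, Sum.elim_inl, not_exists, not_and] at hv
      have hgreen : ∀ b ∈ Biᶜ, c a b = false := by
        intro b hb'
        cases hcab : c a b with
        | false => rfl
        | true => exact absurd hcab (hv b hb')
      have hnot : a ∉ bsetA c Bi := by rw [hb]; exact Set.notMem_empty a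
      have hex : ∃ b ∈ Bi, c a b = false := by
        by_contra hcon
        push_neg at hcon
        refine hnot ⟨fun b hbmem => ?_, hgreen⟩
        cases hcab : c a b with
        | true => rfl
        | false => exact absurd hcab (hcon b hbmem)
      obtain ⟨b, hbmem, hcab⟩ := hex
      refine Or.inr (Or.inr ⟨Sum.inr b, ?_, biAdj_lr c false hcab, biAdj_rl c false (hy b)⟩)
      simp only [Set.mem_compl_iff, Set.mem_setOf_eq, Sum.elim_inr, Set.mem_compl_iff]
      exact fun h' => h' hbmem
    · exact Or.inr (Or.inl (biAdj_rl c false (hy b)))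

lemma twoTreeB (c : α → β → Bool)
    (hX : (XB c).Nonempty) (hY : (YB c).Nonempty)
    (Ai : Set α) (hAc : Aiᶜ.Nonempty) (hb : bsetB c Ai = ∅) :
    ∃ S : Set (α ⊕ β), ((biColorGraph c true).induce S).Connected ∧
      ((biColorGraph c false).induce Sᶜ).Connected := by
  obtain ⟨x, hx⟩ := hX
  obtain ⟨y, hy⟩ := hY
  refine ⟨{z | Sum.elim (fun a => a ∈ Aiᶜ) (fun b => ∃ a ∈ Aiᶜ, c a b = true) z}, ?_, ?_⟩
  · obtain ⟨a0, ha0⟩ := hAc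
    apply induce_connected_hub _ _ (Sum.inr x)
      (by simp only [Set.mem_setOf_eq, Sum.elim_inr]; exact ⟨a0, ha0, hx a0⟩)
    rintro (a | b) hv
    · simp only [Set.mem_setOf_eq, Sum.elim_inl] at hv
      exact Or.inr (Or.inl (biAdj_lr c true (hx a)))
    · simp only [Set.mem_setOf_eq, Sum.elim_inr] at hv
      obtain ⟨a, ha1, ha2⟩ := hv
      exact Or.inr (Or.inr ⟨Sum.inl a, ha1, biAdj_rl c true ha2, biAdj_lr c true (hx a)⟩)
  · have hyS : Sum.inr y ∈
        ({z | Sum.elim (fun a => a ∈ Aiᶜ) (fun b => ∃ a ∈ Aiᶜ, c a b = true) z} : Set (α ⊕ β))ᶜ := by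
      simp only [Set.mem_compl_iff, Set.mem_setOf_eq, Sum.elim_inr, not_exists, not_and]
      intro a _ hcb
      rw [hy a] at hcb
      exact Bool.noConfusion hcb
    apply induce_connected_hub _ _ (Sum.inr y) hyS
    rintro (a | b) hv
    · exact Or.inr (Or.inl (biAdj_lr c false (hy a)))
    · simp only [Set.mem_compl_iff, Set.mem_setOf_eq, Sum.elim_inr, not_exists, not_and] at hv
      have hgreen : ∀ a ∈ Aiᶜ, c a b = false := by
        intro a ha'
        cases hcab : c a b with
        | false => rfl
        | true => exact absurd hcab (hv a ha')
      have hnot : b ∉ bsetB c Ai := by rw [hb]; exact Set.notMem_empty b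
      have hex : ∃ a ∈ Ai, c a b = false := by
        by_contra hcon
        push_neg at hcon
        refine hnot ⟨fun a hamem => ?_, hgreen⟩
        cases hcab : c a b with
        | true => rfl
        | false => exact absurd hcab (hcon a hamem)
      obtain ⟨a, hamem, hcab⟩ := hex
      refine Or.inr (Or.inr ⟨Sum.inl a, ?_, biAdj_rl c false hcab, biAdj_lr c false (hy a)⟩)
      simp only [Set.mem_compl_iff, Set.mem_setOf_eq, Sum.elim_inl, Set.mem_compl_iff]
      exact fun h' => h' hamem

end Lemma3Helpers
section Lemma3Helpers2

variable {α β : Type*}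

lemma isoA1 [Nonempty β] (c : α → β → Bool) {x : α} (hXA : XA c = {x})
    {y : α} (hy : y ∈ YA c) :
    ((biColorGraph c false).induce ({Sum.inl x}ᶜ : Set (α ⊕ β))).Connected := by
  have hx : x ∈ XA c := by rw [hXA]; exact Set.mem_singleton x
  have hyx : Sum.inl y ∈ ({Sum.inl x}ᶜ : Set (α ⊕ β)) := by
    simp only [Set.mem_compl_iff, Set.mem_singleton_iff, Sum.inl.injEq]
    intro h
    subst h
    obtain ⟨b⟩ := ‹Nonempty β›
    exact Bool.noConfusion ((hx b).symm.trans (hy b))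
  apply induce_connected_hub _ _ (Sum.inl y) hyx
  rintro (a | b) hv
  · simp only [Set.mem_compl_iff, Set.mem_singleton_iff, Sum.inl.injEq] at hv
    have hax : a ∉ XA c := by rw [hXA]; simpa using hv
    have hex : ∃ b, c a b = false := by
      by_contra hcon
      push_neg at hcon
      refine hax fun b => ?_
      cases hcb : c a b with
      | true => rfl
      | false => exact absurd hcb (hcon b)
    obtain ⟨b, hcb⟩ := hex
    exact Or.inr (Or.inr ⟨Sum.inr b, by simp, biAdj_lr c false hcb, biAdj_rl c false (hy b)⟩)
  · exact Or.inr (Or.inl (biAdj_rl c false (hy b)))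

lemma isoA2 [Nonempty β] (c : α → β → Bool) {y : α} (hYA : YA c = {y})
    {x : α} (hx : x ∈ XA c) :
    ((biColorGraph c true).induce ({Sum.inl y}ᶜ : Set (α ⊕ β))).Connected := by
  have hy : y ∈ YA c := by rw [hYA]; exact Set.mem_singleton y
  have hxy : Sum.inl x ∈ ({Sum.inl y}ᶜ : Set (α ⊕ β)) := by
    simp only [Set.mem_compl_iff, Set.mem_singleton_iff, Sum.inl.injEq]
    intro h
    subst h
    obtain ⟨b⟩ := ‹Nonempty β›
    exact Bool.noConfusion ((hx b).symm.trans (hy b))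
  apply induce_connected_hub _ _ (Sum.inl x) hxy
  rintro (a | b) hv
  · simp only [Set.mem_compl_iff, Set.mem_singleton_iff, Sum.inl.injEq] at hv
    have hay : a ∉ YA c := by rw [hYA]; simpa using hv
    have hex : ∃ b, c a b = true := by
      by_contra hcon
      push_neg at hcon
      refine hay fun b => ?_
      cases hcb : c a b with
      | false => rfl
      | true => exact absurd hcb (hcon b)
    obtain ⟨b, hcb⟩ := hex
    exact Or.inr (Or.inr ⟨Sum.inr b, by simp, biAdj_lr c true hcb, biAdj_rl c true (hx b)⟩)
  · exact Or.inr (Or.inl (biAdj_rl c true (hx b)))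

lemma isoB1 [Nonempty α] (c : α → β → Bool) {x : β} (hXB : XB c = {x})
    {y : β} (hy : y ∈ YB c) :
    ((biColorGraph c false).induce ({Sum.inr x}ᶜ : Set (α ⊕ β))).Connected := by
  have hx : x ∈ XB c := by rw [hXB]; exact Set.mem_singleton x
  have hyx : Sum.inr y ∈ ({Sum.inr x}ᶜ : Set (α ⊕ β)) := by
    simp only [Set.mem_compl_iff, Set.mem_singleton_iff, Sum.inr.injEq]
    intro h
    subst h
    obtain ⟨a⟩ := ‹Nonempty α›
    exact Bool.noConfusion ((hx a).symm.trans (hy a))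
  apply induce_connected_hub _ _ (Sum.inr y) hyx
  rintro (a | b) hv
  · exact Or.inr (Or.inl (biAdj_lr c false (hy a)))
  · simp only [Set.mem_compl_iff, Set.mem_singleton_iff, Sum.inr.injEq] at hv
    have hbx : b ∉ XB c := by rw [hXB]; simpa using hv
    have hex : ∃ a, c a b = false := by
      by_contra hcon
      push_neg at hcon
      refine hbx fun a => ?_
      cases hcb : c a b with
      | true => rfl
      | false => exact absurd hcb (hcon a)
    obtain ⟨a, hcb⟩ := hex
    exact Or.inr (Or.inr ⟨Sum.inl a, by simp, biAdj_rl c false hcb, biAdj_lr c false (hy a)⟩)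

lemma isoB2 [Nonempty α] (c : α → β → Bool) {y : β} (hYB : YB c = {y})
    {x : β} (hx : x ∈ XB c) :
    ((biColorGraph c true).induce ({Sum.inr y}ᶜ : Set (α ⊕ β))).Connected := by
  have hy : y ∈ YB c := by rw [hYB]; exact Set.mem_singleton y
  have hxy : Sum.inr x ∈ ({Sum.inr y}ᶜ : Set (α ⊕ β)) := by
    simp only [Set.mem_compl_iff, Set.mem_singleton_iff, Sum.inr.injEq]
    intro h
    subst h
    obtain ⟨a⟩ := ‹Nonempty α›
    exact Bool.noConfusion ((hx a).symm.trans (hy a))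
  apply induce_connected_hub _ _ (Sum.inr x) hxy
  rintro (a | b) hv
  · exact Or.inr (Or.inl (biAdj_lr c true (hx a)))
  · simp only [Set.mem_compl_iff, Set.mem_singleton_iff, Sum.inr.injEq] at hv
    have hby : b ∉ YB c := by rw [hYB]; simpa using hv
    have hex : ∃ a, c a b = true := by
      by_contra hcon
      push_neg at hcon
      refine hby fun a => ?_
      cases hcb : c a b with
      | false => rfl
      | true => exact absurd hcb (hcon a)
    obtain ⟨a, hcb⟩ := hex
    exact Or.inr (Or.inr ⟨Sum.inl a, by simp, biAdj_rl c true hcb, biAdj_lr c true (hx a)⟩)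

end Lemma3Helpers2
section Lemma3Main

variable {α β : Type*}

lemma mainA [Fintype α] [Fintype β] [Nonempty β] (c : α → β → Bool)
    (hXA : (XA c).Nonempty) (hYA : (YA c).Nonempty) (hn1 : ¬ IsS1 c) :
    ((∃ (v : α ⊕ β) (k : Bool), ((biColorGraph c k).induce {v}ᶜ).Connected) ∨
      ∃ S : Set (α ⊕ β), ((biColorGraph c true).induce S).Connected ∧
        ((biColorGraph c false).induce Sᶜ).Connected) ∧
    (min (XA c).ncard (YA c).ncard ≠ 1 →
      ∃ S : Set (α ⊕ β), ((biColorGraph c true).induce S).Connected ∧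
        ((biColorGraph c false).induce Sᶜ).Connected) := by
  have hX1 : 1 ≤ (XA c).ncard := (Set.ncard_pos (Set.toFinite _)).mpr hXA
  have hY1 : 1 ≤ (YA c).ncard := (Set.ncard_pos (Set.toFinite _)).mpr hYA
  by_cases h2 : 2 ≤ (XA c).ncard ∧ 2 ≤ (YA c).ncard
  · have hcard1 : Fintype.card β ≠ 1 := fun h1 => hn1 (Or.inl ⟨h1, h2.1, h2.2⟩)
    have hcard2 : 2 ≤ Fintype.card β := by
      have := Fintype.card_pos (α := β); omega
    have hnprime : ¬ IsS1PrimeA c := fun hp => hn1 (Or.inr (Or.inl hp))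
    rw [IsS1PrimeA] at hnprime
    push_neg at hnprime
    obtain ⟨Bi, hBi1, hBi2, hbad⟩ := hnprime h2.1 h2.2 hcard2
    have htwo : ∃ S : Set (α ⊕ β), ((biColorGraph c true).induce S).Connected ∧
        ((biColorGraph c false).induce Sᶜ).Connected := by
      by_cases hbn : (bsetA c Bi).Nonempty
      · exact twoTreeA c hXA hYA Biᶜ (by rwa [compl_compl]) (hbad hbn)
      · exact twoTreeA c hXA hYA Bi hBi2 (Set.not_nonempty_iff_eq_empty.mp hbn)
    exact ⟨Or.inr htwo, fun _ => htwo⟩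
  · rw [not_and_or] at h2
    push_neg at h2
    have hone : (XA c).ncard = 1 ∨ (YA c).ncard = 1 := by omega
    have hmin1 : min (XA c).ncard (YA c).ncard = 1 := by omega
    rcases hone with hone | hone
    · obtain ⟨x, hxeq⟩ := Set.ncard_eq_one.mp hone
      obtain ⟨y, hy⟩ := hYA
      exact ⟨Or.inl ⟨Sum.inl x, false, isoA1 c hxeq hy⟩, fun hmin => absurd hmin1 hmin⟩
    · obtain ⟨y, hyeq⟩ := Set.ncard_eq_one.mp hone
      obtain ⟨x, hx⟩ := hXA
      exact ⟨Or.inl ⟨Sum.inl y, true, isoA2 c hyeq hx⟩, fun hmin => absurd hmin1 hmin⟩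

lemma mainB [Fintype α] [Fintype β] [Nonempty α] (c : α → β → Bool)
    (hXB : (XB c).Nonempty) (hYB : (YB c).Nonempty) (hn1 : ¬ IsS1 c) :
    ((∃ (v : α ⊕ β) (k : Bool), ((biColorGraph c k).induce {v}ᶜ).Connected) ∨
      ∃ S : Set (α ⊕ β), ((biColorGraph c true).induce S).Connected ∧
        ((biColorGraph c false).induce Sᶜ).Connected) ∧
    (min (XB c).ncard (YB c).ncard ≠ 1 →
      ∃ S : Set (α ⊕ β), ((biColorGraph c true).induce S).Connected ∧
        ((biColorGraph c false).induce Sᶜ).Connected) := by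
  have hX1 : 1 ≤ (XB c).ncard := (Set.ncard_pos (Set.toFinite _)).mpr hXB
  have hY1 : 1 ≤ (YB c).ncard := (Set.ncard_pos (Set.toFinite _)).mpr hYB
  by_cases h2 : 2 ≤ (XB c).ncard ∧ 2 ≤ (YB c).ncard
  · have hcard1 : Fintype.card α ≠ 1 := fun h1 => hn1 (Or.inr (Or.inr (Or.inl ⟨h1, h2.1, h2.2⟩)))
    have hcard2 : 2 ≤ Fintype.card α := by
      have := Fintype.card_pos (α := α); omega
    have hnprime : ¬ IsS1PrimeB c := fun hp => hn1 (Or.inr (Or.inr (Or.inr hp)))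
    rw [IsS1PrimeB] at hnprime
    push_neg at hnprime
    obtain ⟨Ai, hAi1, hAi2, hbad⟩ := hnprime h2.1 h2.2 hcard2
    have htwo : ∃ S : Set (α ⊕ β), ((biColorGraph c true).induce S).Connected ∧
        ((biColorGraph c false).induce Sᶜ).Connected := by
      by_cases hbn : (bsetB c Ai).Nonempty
      · exact twoTreeB c hXB hYB Aiᶜ (by rwa [compl_compl]) (hbad hbn)
      · exact twoTreeB c hXB hYB Ai hAi2 (Set.not_nonempty_iff_eq_empty.mp hbn)
    exact ⟨Or.inr htwo, fun _ => htwo⟩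
  · rw [not_and_or] at h2
    push_neg at h2
    have hone : (XB c).ncard = 1 ∨ (YB c).ncard = 1 := by omega
    have hmin1 : min (XB c).ncard (YB c).ncard = 1 := by omega
    rcases hone with hone | hone
    · obtain ⟨x, hxeq⟩ := Set.ncard_eq_one.mp hone
      obtain ⟨y, hy⟩ := hYB
      exact ⟨Or.inl ⟨Sum.inr x, false, isoB1 c hxeq hy⟩, fun hmin => absurd hmin1 hmin⟩
    · obtain ⟨y, hyeq⟩ := Set.ncard_eq_one.mp hone
      obtain ⟨x, hx⟩ := hXB
      exact ⟨Or.inl ⟨Sum.inr y, true, isoB2 c hyeq hx⟩, fun hmin => absurd hmin1 hmin⟩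

end Lemma3Main
/-- **Lemma 3.** If a 2-edge-colored complete bipartite graph is an `S2`-type
graph, then its vertex set can be partitioned into either an isolated vertex together with
one monochromatic tree, or into two vertex-disjoint monochromatic trees of different colors.
Moreover, except in the case `min {|A1|, |A3|} = 1` (resp. `min {|B1|, |B3|} = 1`) for the
partite set containing `X(G) ∪ Y(G)`, the vertex set can always be partitioned into two
vertex-disjoint monochromatic trees of different colors. -/
theorem s2type_partition {α β : Type*} [Fintype α] [Fintype β] [Nonempty α] [Nonempty β]
    (c : α → β → Bool) (h : IsS2 c) :
    ((∃ (v : α ⊕ β) (k : Bool), ((biColorGraph c k).induce {v}ᶜ).Connected) ∨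
      ∃ S : Set (α ⊕ β), ((biColorGraph c true).induce S).Connected ∧
        ((biColorGraph c false).induce Sᶜ).Connected) ∧
    (min (XA c).ncard (YA c).ncard ≠ 1 → min (XB c).ncard (YB c).ncard ≠ 1 →
      ∃ S : Set (α ⊕ β), ((biColorGraph c true).induce S).Connected ∧
        ((biColorGraph c false).induce Sᶜ).Connected) := by
  obtain ⟨⟨hXor, hYor⟩, hn1⟩ := h
  rcases hXor with hXAn | hXBn
  · have hYBe : YB c = ∅ := by
      ext b
      simp only [Set.mem_empty_iff_false, iff_false]
      intro hb
      obtain ⟨x, hx⟩ := hXAn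
      exact Bool.noConfusion ((hx b).symm.trans (hb x))
    have hYAn : (YA c).Nonempty := by
      rcases hYor with h' | h'
      · exact h'
      · rw [hYBe] at h'; exact absurd h' Set.not_nonempty_empty
    obtain ⟨h1, h2⟩ := mainA c hXAn hYAn hn1
    exact ⟨h1, fun hmA _ => h2 hmA⟩
  · have hYAe : YA c = ∅ := by
      ext a
      simp only [Set.mem_empty_iff_false, iff_false]
      intro ha
      obtain ⟨b, hb⟩ := hXBn
      exact Bool.noConfusion ((hb a).symm.trans (ha b))
    have hYBn : (YB c).Nonempty := by
      rcases hYor with h' | h'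
      · rw [hYAe] at h'; exact absurd h' Set.not_nonempty_empty
      · exact h'
    obtain ⟨h1, h2⟩ := mainB c hXBn hYBn hn1
    exact ⟨h1, fun _ hmB => h2 hmB⟩
end

section
/- Let K(A,B) be a complete bipartite graph whose edges are colored with two colors, blue and green. Then exactly one of the following holds: (1) K(A,B) has a monochromatic spanning tree; (2) K(A,B) is an M-type graph; (3) K(A,B) is an S2-type graph; (4) K(A,B) is an S1-type graph. -/
lemma biAdj {α β : Type*} {c : α → β → Bool} {k : Bool} {a : α} {b : β} :
    (biColorGraph c k).Adj (Sum.inl a) (Sum.inr b) ↔ c a b = k := by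
  constructor
  · rintro (⟨a', b', h1, h2, h3⟩ | ⟨a', b', h1, h2, h3⟩)
    · cases h1; cases h2; exact h3
    · exact absurd h1 (by simp)
  · intro h; exact Or.inl ⟨a, b, rfl, rfl, h⟩

lemma reach_invariant {V : Type*} {G : SimpleGraph V} {P : V → Prop}
    (h : ∀ u v, G.Adj u v → (P u ↔ P v)) {x y : V} (hr : G.Reachable x y) :
    P x ↔ P y := by
  obtain ⟨w⟩ := hr
  induction w with
  | nil => rfl
  | cons ha _ ih => exact (h _ _ ha).trans ih

-- connected → every vertex of α has a k-colored edge, same for β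
lemma conn_edges {α β : Type*} [Nonempty α] [Nonempty β] {c : α → β → Bool} {k : Bool}
    (h : (biColorGraph c k).Connected) :
    (∀ a, ∃ b, c a b = k) ∧ (∀ b, ∃ a, c a b = k) := by
  constructor
  · intro a
    obtain ⟨b0⟩ := ‹Nonempty β›
    obtain ⟨w⟩ := h.preconnected (Sum.inl a) (Sum.inr b0)
    cases w with
    | cons ha _ =>
      rcases ha with ⟨a', b', h1, h2, h3⟩ | ⟨a', b', h1, h2, h3⟩
      · cases h1; exact ⟨b', h3⟩
      · exact absurd h1 (by simp)
  · intro b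
    obtain ⟨a0⟩ := ‹Nonempty α›
    obtain ⟨w⟩ := h.preconnected (Sum.inr b) (Sum.inl a0)
    cases w with
    | cons hb _ =>
      rcases hb with ⟨a', b', h1, h2, h3⟩ | ⟨a', b', h1, h2, h3⟩
      · exact absurd h1 (by simp)
      · cases h1; exact ⟨a', h3⟩

lemma conn_of_cross {α β : Type*} (c : α → β → Bool) (g : Bool)
    (A1 : Set α) (B1 : Set β)
    (h1 : ∀ a ∈ A1, ∀ b ∈ B1ᶜ, c a b = g)
    (h2 : ∀ a ∈ A1ᶜ, ∀ b ∈ B1, c a b = g)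
    (a0 : α) (b0 : β) (ha0 : a0 ∈ A1) (hb0 : b0 ∈ B1) (hgg : c a0 b0 = g)
    (hA : A1ᶜ.Nonempty) (hB : B1ᶜ.Nonempty) : (biColorGraph c g).Connected := by
  obtain ⟨a1, ha1⟩ := hA
  obtain ⟨b1, hb1⟩ := hB
  have hub : ∀ z, (biColorGraph c g).Reachable (Sum.inl a0) z := by
    have hinr : ∀ b, (biColorGraph c g).Reachable (Sum.inl a0) (Sum.inr b) := by
      intro b
      by_cases hb : b ∈ B1
      · -- a0 ~ b0 ~ a1(∈A1ᶜ) ~ b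
        exact ((biAdj.2 hgg).reachable.trans
          (biAdj.2 (h2 a1 ha1 b0 hb0)).symm.reachable).trans
          (biAdj.2 (h2 a1 ha1 b hb)).reachable
      · exact (biAdj.2 (h1 a0 ha0 b hb)).reachable
    intro z
    rcases z with a | b
    · by_cases ha : a ∈ A1
      · exact (hinr b1).trans (biAdj.2 (h1 a ha b1 hb1)).symm.reachable
      · exact (biAdj.2 hgg).reachable.trans (biAdj.2 (h2 a ha b0 hb0)).symm.reachable
    · exact hinr b
  haveI : Nonempty (α ⊕ β) := ⟨Sum.inl a0⟩
  exact ⟨fun x y => (hub x).symm.trans (hub y)⟩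

lemma bool_ne {u v : Bool} (h : u ≠ v) : u = !v := by revert h; revert u v; decide

lemma key {α β : Type*} [Nonempty α] [Nonempty β] (c : α → β → Bool) (k : Bool)
    (hk : ¬ (biColorGraph c k).Connected)
    (hk' : ¬ (biColorGraph c (!k)).Connected) :
    (∃ a, ∀ b, c a b = !k) ∨ (∃ b, ∀ a, c a b = !k) ∨
    (∃ (A1 : Set α) (B1 : Set β), A1.Nonempty ∧ A1ᶜ.Nonempty ∧ B1.Nonempty ∧ B1ᶜ.Nonempty ∧
      (∀ a ∈ A1, ∀ b ∈ B1, c a b = k) ∧ (∀ a ∈ A1ᶜ, ∀ b ∈ B1ᶜ, c a b = k) ∧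
      (∀ a ∈ A1, ∀ b ∈ B1ᶜ, c a b = !k) ∧ (∀ a ∈ A1ᶜ, ∀ b ∈ B1, c a b = !k)) := by
  have hne : ¬ (biColorGraph c k).Preconnected := by
    intro hp
    haveI : Nonempty (α ⊕ β) := ⟨Sum.inl (Classical.arbitrary α)⟩
    exact hk ⟨hp⟩
  obtain ⟨x, hx⟩ := not_forall.mp hne
  obtain ⟨y, hy⟩ := not_forall.mp hx
  set A1 : Set α := {a | (biColorGraph c k).Reachable x (Sum.inl a)} with hA1def
  set B1 : Set β := {b | (biColorGraph c k).Reachable x (Sum.inr b)} with hB1def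
  have hcross1 : ∀ a ∈ A1, ∀ b ∈ B1ᶜ, c a b = !k := by
    intro a ha b hb
    exact bool_ne fun h => hb (ha.trans (biAdj.2 h).reachable)
  have hcross2 : ∀ a ∈ A1ᶜ, ∀ b ∈ B1, c a b = !k := by
    intro a ha b hb
    exact bool_ne fun h => ha (hb.trans (biAdj.2 h).symm.reachable)
  by_cases hB2 : B1ᶜ.Nonempty
  · by_cases hB1 : B1.Nonempty
    · by_cases hA1 : A1.Nonempty
      · by_cases hA2 : A1ᶜ.Nonempty
        · by_cases hM1 : ∀ a ∈ A1, ∀ b ∈ B1, c a b = k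
          · by_cases hM2 : ∀ a ∈ A1ᶜ, ∀ b ∈ B1ᶜ, c a b = k
            · exact Or.inr (Or.inr ⟨A1, B1, hA1, hA2, hB1, hB2, hM1, hM2, hcross1, hcross2⟩)
            · push_neg at hM2
              obtain ⟨a0, ha0, b0, hb0, h0⟩ := hM2
              refine absurd (conn_of_cross c (!k) A1ᶜ B1ᶜ ?_ ?_ a0 b0 ha0 hb0 (bool_ne h0)
                ?_ ?_) hk'
              · intro a ha b hb; rw [compl_compl] at hb; exact hcross2 a ha b hb
              · intro a ha b hb; rw [compl_compl] at ha; exact hcross1 a ha b hb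
              · rwa [compl_compl]
              · rwa [compl_compl]
          · push_neg at hM1
            obtain ⟨a0, ha0, b0, hb0, h0⟩ := hM1
            exact absurd (conn_of_cross c (!k) A1 B1 hcross1 hcross2 a0 b0 ha0 hb0
              (bool_ne h0) hA2 hB2) hk'
        · obtain ⟨b, hb⟩ := hB2
          refine Or.inr (Or.inl ⟨b, fun a => hcross1 a ?_ b hb⟩)
          by_contra h; exact hA2 ⟨a, h⟩
      · obtain ⟨b, hb⟩ := hB1
        refine Or.inr (Or.inl ⟨b, fun a => hcross2 a (fun h => hA1 ⟨a, h⟩) b hb⟩)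
    · rcases x with a | b
      · have ha : a ∈ A1 := SimpleGraph.Reachable.refl _
        exact Or.inl ⟨a, fun b => hcross1 a ha b (fun h => hB1 ⟨b, h⟩)⟩
      · exact absurd ⟨b, SimpleGraph.Reachable.refl _⟩ hB1
  · rcases y with a | b
    · have ha : a ∈ A1ᶜ := hy
      refine Or.inl ⟨a, fun b => hcross2 a ha b ?_⟩
      by_contra h; exact hB2 ⟨b, h⟩
    · exact absurd ⟨b, hy⟩ hB2

/-- Auxiliary: the "M-structure" with blue color `k`. -/
def MW {α β : Type*} (c : α → β → Bool) (k : Bool) : Prop :=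
  ∃ (A1 : Set α) (B1 : Set β), A1.Nonempty ∧ A1ᶜ.Nonempty ∧ B1.Nonempty ∧ B1ᶜ.Nonempty ∧
    (∀ a ∈ A1, ∀ b ∈ B1, c a b = k) ∧ (∀ a ∈ A1ᶜ, ∀ b ∈ B1ᶜ, c a b = k) ∧
    (∀ a ∈ A1, ∀ b ∈ B1ᶜ, c a b = !k) ∧ (∀ a ∈ A1ᶜ, ∀ b ∈ B1, c a b = !k)

lemma MW_M {α β : Type*} {c : α → β → Bool} {k : Bool} (h : MW c k) : IsMType c := by
  obtain ⟨A1, B1, n1, n2, n3, n4, e1, e2, e3, e4⟩ := h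
  cases k with
  | true =>
    exact ⟨A1, B1, n1, n2, n3, n4, e1, e2,
      fun a ha b hb => by simpa using e3 a ha b hb,
      fun a ha b hb => by simpa using e4 a ha b hb⟩
  | false =>
    refine ⟨A1, B1ᶜ, n1, n2, n4, by rwa [compl_compl], ?_, ?_, ?_, ?_⟩
    · exact fun a ha b hb => by simpa using e3 a ha b hb
    · intro a ha b hb; rw [compl_compl] at hb
      simpa using e4 a ha b hb
    · intro a ha b hb; rw [compl_compl] at hb
      exact e1 a ha b hb
    · exact e2

lemma M_not_conn {α β : Type*} {c : α → β → Bool} (h : IsMType c) (k : Bool) :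
    ¬ (biColorGraph c k).Connected := by
  obtain ⟨A1, B1, ⟨a1, ha1⟩, ⟨a2, ha2⟩, ⟨b1, hb1⟩, ⟨b2, hb2⟩, hbb1, hbb2, hgg1, hgg2⟩ := h
  intro hconn
  cases k with
  | true =>
    have base : ∀ a b, c a b = true → (a ∈ A1 ↔ b ∈ B1) := by
      intro a b hc
      constructor
      · intro ha; by_contra hb; exact absurd (hgg1 a ha b hb) (by simp [hc])
      · intro hb; by_contra ha; exact absurd (hgg2 a ha b hb) (by simp [hc])
    have inv : ∀ u v, (biColorGraph c true).Adj u v →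
        (Sum.elim (· ∈ A1) (· ∈ B1) u ↔ Sum.elim (· ∈ A1) (· ∈ B1) v) := by
      rintro u v (⟨a, b, rfl, rfl, hc⟩ | ⟨a, b, rfl, rfl, hc⟩)
      · simpa using base a b hc
      · simpa using (base a b hc).symm
    have := reach_invariant inv (hconn.preconnected (Sum.inl a1) (Sum.inr b2))
    simp only [Sum.elim_inl, Sum.elim_inr] at this
    exact hb2 (this.mp ha1)
  | false =>
    have base : ∀ a b, c a b = false → (a ∈ A1 ↔ b ∉ B1) := by
      intro a b hc
      constructor
      · intro ha hb; exact absurd (hbb1 a ha b hb) (by simp [hc])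
      · intro hb; by_contra ha; exact absurd (hbb2 a ha b hb) (by simp [hc])
    have inv : ∀ u v, (biColorGraph c false).Adj u v →
        (Sum.elim (· ∈ A1) (· ∉ B1) u ↔ Sum.elim (· ∈ A1) (· ∉ B1) v) := by
      rintro u v (⟨a, b, rfl, rfl, hc⟩ | ⟨a, b, rfl, rfl, hc⟩)
      · simpa using base a b hc
      · simpa using (base a b hc).symm
    have := reach_invariant inv (hconn.preconnected (Sum.inl a1) (Sum.inr b1))
    simp only [Sum.elim_inl, Sum.elim_inr] at this
    exact (this.mp ha1) hb1

lemma M_not_SType {α β : Type*} {c : α → β → Bool} (h : IsMType c) : ¬ IsSType c := by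
  obtain ⟨A1, B1, ⟨a1, ha1⟩, ⟨a2, ha2⟩, ⟨b1, hb1⟩, ⟨b2, hb2⟩, hbb1, hbb2, hgg1, hgg2⟩ := h
  rintro ⟨-, (⟨a, ha⟩ | ⟨b, hb⟩)⟩
  · by_cases hA : a ∈ A1
    · exact absurd (hbb1 a hA b1 hb1) (by simp [ha b1])
    · exact absurd (hbb2 a hA b2 hb2) (by simp [ha b2])
  · by_cases hB : b ∈ B1
    · exact absurd (hbb1 a1 ha1 b hB) (by simp [hb a1])
    · exact absurd (hbb2 a2 ha2 b hB) (by simp [hb a2])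

lemma S1_SType {α β : Type*} [Fintype α] [Fintype β] {c : α → β → Bool}
    (h : IsS1 c) : IsSType c := by
  rcases h with ⟨-, hX, hY⟩ | ⟨hX, hY, -⟩ | ⟨-, hX, hY⟩ | ⟨hX, hY, -⟩
  · exact ⟨Or.inl (Set.nonempty_of_ncard_ne_zero (by omega)),
      Or.inl (Set.nonempty_of_ncard_ne_zero (by omega))⟩
  · exact ⟨Or.inl (Set.nonempty_of_ncard_ne_zero (by omega)),
      Or.inl (Set.nonempty_of_ncard_ne_zero (by omega))⟩
  · exact ⟨Or.inr (Set.nonempty_of_ncard_ne_zero (by omega)),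
      Or.inr (Set.nonempty_of_ncard_ne_zero (by omega))⟩
  · exact ⟨Or.inr (Set.nonempty_of_ncard_ne_zero (by omega)),
      Or.inr (Set.nonempty_of_ncard_ne_zero (by omega))⟩

lemma conn_not_SType {α β : Type*} [Nonempty α] [Nonempty β] {c : α → β → Bool}
    (h : ∃ k, (biColorGraph c k).Connected) : ¬ IsSType c := by
  obtain ⟨k, hconn⟩ := h
  obtain ⟨hae, hbe⟩ := conn_edges hconn
  rintro ⟨hX, hY⟩
  cases k with
  | true =>
    rcases hY with ⟨a, ha⟩ | ⟨b, hb⟩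
    · obtain ⟨b, hb'⟩ := hae a; simp [ha b] at hb'
    · obtain ⟨a, ha'⟩ := hbe b; simp [hb a] at ha'
  | false =>
    rcases hX with ⟨a, ha⟩ | ⟨b, hb⟩
    · obtain ⟨b, hb'⟩ := hae a; simp [ha b] at hb'
    · obtain ⟨a, ha'⟩ := hbe b; simp [hb a] at ha'

/-- **Corollary 5.** For every 2-edge-colored complete bipartite graph,
exactly one of the following holds: (1) it has a monochromatic spanning tree;
(2) it is `M`-type; (3) it is `S2`-type; (4) it is `S1`-type. -/
theorem two_colored_trichotomy {α β : Type*} [Fintype α] [Fintype β]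
    [Nonempty α] [Nonempty β] (c : α → β → Bool) :
    ((∃ k, (biColorGraph c k).Connected) ∨ IsMType c ∨ IsS2 c ∨ IsS1 c) ∧
    ¬ ((∃ k, (biColorGraph c k).Connected) ∧ IsMType c) ∧
    ¬ ((∃ k, (biColorGraph c k).Connected) ∧ IsS2 c) ∧
    ¬ ((∃ k, (biColorGraph c k).Connected) ∧ IsS1 c) ∧
    ¬ (IsMType c ∧ IsS2 c) ∧
    ¬ (IsMType c ∧ IsS1 c) ∧
    ¬ (IsS2 c ∧ IsS1 c) := by
  constructor
  · by_cases hb : (biColorGraph c true).Connected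
    · exact Or.inl ⟨true, hb⟩
    by_cases hg : (biColorGraph c false).Connected
    · exact Or.inl ⟨false, hg⟩
    have hg' : ¬ (biColorGraph c (!true)).Connected := by simpa using hg
    have hb' : ¬ (biColorGraph c (!false)).Connected := by simpa using hb
    have hY : (YA c).Nonempty ∨ (YB c).Nonempty ∨ IsMType c := by
      rcases key c true hb hg' with ⟨a, ha⟩ | ⟨b0, hb0⟩ | hM
      · exact Or.inl ⟨a, fun b => by simpa using ha b⟩
      · exact Or.inr (Or.inl ⟨b0, fun a => by simpa using hb0 a⟩)
      · exact Or.inr (Or.inr (MW_M hM))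
    have hX : (XA c).Nonempty ∨ (XB c).Nonempty ∨ IsMType c := by
      rcases key c false hg hb' with ⟨a, ha⟩ | ⟨b0, hb0⟩ | hM
      · exact Or.inl ⟨a, fun b => by simpa using ha b⟩
      · exact Or.inr (Or.inl ⟨b0, fun a => by simpa using hb0 a⟩)
      · exact Or.inr (Or.inr (MW_M hM))
    have hMS : IsMType c ∨ IsSType c := by
      rcases hY with hy | hy | hM
      · rcases hX with hx | hx | hM
        · exact Or.inr ⟨Or.inl hx, Or.inl hy⟩
        · exact Or.inr ⟨Or.inr hx, Or.inl hy⟩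
        · exact Or.inl hM
      · rcases hX with hx | hx | hM
        · exact Or.inr ⟨Or.inl hx, Or.inr hy⟩
        · exact Or.inr ⟨Or.inr hx, Or.inr hy⟩
        · exact Or.inl hM
      · exact Or.inl hM
    rcases hMS with hM | hS
    · exact Or.inr (Or.inl hM)
    · by_cases hS1 : IsS1 c
      · exact Or.inr (Or.inr (Or.inr hS1))
      · exact Or.inr (Or.inr (Or.inl ⟨hS, hS1⟩))
  refine ⟨?_, ?_, ?_, ?_, ?_, ?_⟩
  · rintro ⟨⟨k, hc⟩, hM⟩; exact M_not_conn hM k hc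
  · rintro ⟨hc, hS, -⟩; exact conn_not_SType hc hS
  · rintro ⟨hc, hS1⟩; exact conn_not_SType hc (S1_SType hS1)
  · rintro ⟨hM, hS, -⟩; exact M_not_SType hM hS
  · rintro ⟨hM, hS1⟩; exact M_not_SType hM (S1_SType hS1)
  · rintro ⟨⟨-, hn⟩, hS1⟩; exact hn hS1
end

section
/- Let K(A,B) be a complete bipartite graph whose edges are colored with two colors, blue and green, and suppose K(A,B) is an S1-type graph with X(G) ∪ Y(G) ⊆ A, where A = A1 ∪ A2 ∪ A3. Then the vertex set of K(A,B) can be partitioned into exactly min{|A1| + 1, |A3| + 1, min_i |b(Bi)| + 2, min_i |b(B̄i)| + 2} vertex-disjoint monochromatic trees (the inner minima being over all nonempty partitions B = Bi ∪ B̄i), and no partition into fewer vertex-disjoint monochromatic trees exists. -/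
section S1Helpers

lemma bicolor_adj {α β : Type*} (c : α → β → Bool) (k : Bool) (a : α) (b : β)
    (h : c a b = k) : (biColorGraph c k).Adj (Sum.inl a) (Sum.inr b) :=
  Or.inl ⟨a, b, rfl, rfl, h⟩

lemma connected_of_hub {W : Type*} (H : SimpleGraph W) (hub : W)
    (h : ∀ v, H.Reachable v hub) : H.Connected :=
  (SimpleGraph.connected_iff_exists_forall_reachable H).mpr ⟨hub, fun w => (h w).symm⟩

lemma induce_adj {V : Type*} {G : SimpleGraph V} {S : Set V} {x y : V} (hx : x ∈ S) (hy : y ∈ S)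
    (h : G.Adj x y) : (G.induce S).Adj ⟨x, hx⟩ ⟨y, hy⟩ := h

lemma singleton_monotree {α β : Type*} (c : α → β → Bool) (x : α ⊕ β) :
    IsMonoTreeSet c {x} := by
  refine ⟨true, connected_of_hub _ ⟨x, rfl⟩ ?_⟩
  rintro ⟨y, hy⟩
  rw [Set.mem_singleton_iff] at hy
  subst hy
  exact SimpleGraph.Reachable.refl _


lemma construct_green {α β : Type*} [Fintype α] [Fintype β] (c : α → β → Bool)
    (hb : Nonempty β) (hY : (YA c).Nonempty) :
    ∃ P : Finset (Set (α ⊕ β)), IsMonoTreePartition c P ∧ P.card = (XA c).ncard + 1 := by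
  classical
  obtain ⟨a3, ha3⟩ := hY
  obtain ⟨b0⟩ := hb
  set G0 : Set (α ⊕ β) := {x | (∃ b, x = Sum.inr b) ∨ ∃ a, x = Sum.inl a ∧ a ∉ XA c} with hG0def
  have hinr : ∀ b, Sum.inr b ∈ G0 := fun b => Or.inl ⟨b, rfl⟩
  have hinl : ∀ a, a ∉ XA c → Sum.inl a ∈ G0 := fun a ha => Or.inr ⟨a, rfl, ha⟩
  have ha3X : a3 ∉ XA c := fun h => by have h1 := h b0; have h2 := ha3 b0; simp_all
  have hconn : ((biColorGraph c false).induce G0).Connected := by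
    apply connected_of_hub _ ⟨Sum.inr b0, hinr b0⟩
    have step3 : ((biColorGraph c false).induce G0).Adj ⟨Sum.inl a3, hinl a3 ha3X⟩
        ⟨Sum.inr b0, hinr b0⟩ := induce_adj _ _ (bicolor_adj c false a3 b0 (ha3 b0))
    have reach2 : ∀ (b : β), ((biColorGraph c false).induce G0).Reachable
        ⟨Sum.inr b, hinr b⟩ ⟨Sum.inr b0, hinr b0⟩ := by
      intro b
      have s1 : ((biColorGraph c false).induce G0).Adj ⟨Sum.inr b, hinr b⟩
          ⟨Sum.inl a3, hinl a3 ha3X⟩ := induce_adj _ _ (bicolor_adj c false a3 b (ha3 b)).symm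
      exact s1.reachable.trans step3.reachable
    rintro ⟨x, hx⟩
    rcases hx with ⟨b, rfl⟩ | ⟨a, rfl, haX⟩
    · exact reach2 b
    · obtain ⟨b, hbb⟩ : ∃ b, c a b = false := by
        by_contra hno; push_neg at hno
        exact haX (fun b => by have := hno b; simp_all)
      have s1 : ((biColorGraph c false).induce G0).Adj ⟨Sum.inl a, hinl a haX⟩
          ⟨Sum.inr b, hinr b⟩ := induce_adj _ _ (bicolor_adj c false a b hbb)
      exact s1.reachable.trans (reach2 b)
  set P : Finset (Set (α ⊕ β)) :=
    insert G0 (((XA c).toFinite.toFinset).image (fun a => ({Sum.inl a} : Set (α ⊕ β)))) with hPdef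
  refine ⟨P, ⟨?_, ?_⟩, ?_⟩
  · intro S hS
    rcases Finset.mem_insert.mp hS with rfl | hS
    · exact ⟨false, hconn⟩
    · obtain ⟨a, _, rfl⟩ := Finset.mem_image.mp hS
      exact singleton_monotree c _
  · intro x
    rcases x with a | b
    · by_cases haX : a ∈ XA c
      · refine ⟨{Sum.inl a}, ⟨Finset.mem_insert_of_mem (Finset.mem_image.mpr
          ⟨a, by simpa using haX, rfl⟩), rfl⟩, ?_⟩
        rintro S ⟨hS, hxS⟩
        rcases Finset.mem_insert.mp hS with rfl | hS
        · rcases hxS with ⟨b, hb⟩ | ⟨a', ha1, ha2⟩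
          · simp at hb
          · rw [Sum.inl.injEq] at ha1; subst ha1; exact absurd haX ha2
        · obtain ⟨a', _, rfl⟩ := Finset.mem_image.mp hS
          rw [Set.mem_singleton_iff, Sum.inl.injEq] at hxS; subst hxS; rfl
      · refine ⟨G0, ⟨Finset.mem_insert_self _ _, hinl a haX⟩, ?_⟩
        rintro S ⟨hS, hxS⟩
        rcases Finset.mem_insert.mp hS with rfl | hS
        · rfl
        · obtain ⟨a', ha', rfl⟩ := Finset.mem_image.mp hS
          rw [Set.mem_singleton_iff, Sum.inl.injEq] at hxS; subst hxS
          exact absurd (by simpa using ha') haX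
    · refine ⟨G0, ⟨Finset.mem_insert_self _ _, hinr b⟩, ?_⟩
      rintro S ⟨hS, hxS⟩
      rcases Finset.mem_insert.mp hS with rfl | hS
      · rfl
      · obtain ⟨a', _, rfl⟩ := Finset.mem_image.mp hS
        simp at hxS
  · have hG0notmem : G0 ∉ ((XA c).toFinite.toFinset).image
        (fun a => ({Sum.inl a} : Set (α ⊕ β))) := by
      intro hmem
      obtain ⟨a, _, heq⟩ := Finset.mem_image.mp hmem
      have hb := hinr b0
      rw [← heq] at hb
      simp at hb
    have hinj : Function.Injective (fun a : α => ({Sum.inl a} : Set (α ⊕ β))) := by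
      intro x y hxy
      simpa using hxy
    rw [hPdef, Finset.card_insert_of_notMem hG0notmem, Finset.card_image_of_injective _ hinj,
      Set.ncard_eq_toFinset_card _ (XA c).toFinite]


lemma construct_blue {α β : Type*} [Fintype α] [Fintype β] (c : α → β → Bool)
    (hb : Nonempty β) (hY : (XA c).Nonempty) :
    ∃ P : Finset (Set (α ⊕ β)), IsMonoTreePartition c P ∧ P.card = (YA c).ncard + 1 := by
  classical
  obtain ⟨a3, ha3⟩ := hY
  obtain ⟨b0⟩ := hb
  set G0 : Set (α ⊕ β) := {x | (∃ b, x = Sum.inr b) ∨ ∃ a, x = Sum.inl a ∧ a ∉ YA c} with hG0def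
  have hinr : ∀ b, Sum.inr b ∈ G0 := fun b => Or.inl ⟨b, rfl⟩
  have hinl : ∀ a, a ∉ YA c → Sum.inl a ∈ G0 := fun a ha => Or.inr ⟨a, rfl, ha⟩
  have ha3X : a3 ∉ YA c := fun h => by have h1 := h b0; have h2 := ha3 b0; simp_all
  have hconn : ((biColorGraph c true).induce G0).Connected := by
    apply connected_of_hub _ ⟨Sum.inr b0, hinr b0⟩
    have step3 : ((biColorGraph c true).induce G0).Adj ⟨Sum.inl a3, hinl a3 ha3X⟩
        ⟨Sum.inr b0, hinr b0⟩ := induce_adj _ _ (bicolor_adj c true a3 b0 (ha3 b0))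
    have reach2 : ∀ (b : β), ((biColorGraph c true).induce G0).Reachable
        ⟨Sum.inr b, hinr b⟩ ⟨Sum.inr b0, hinr b0⟩ := by
      intro b
      have s1 : ((biColorGraph c true).induce G0).Adj ⟨Sum.inr b, hinr b⟩
          ⟨Sum.inl a3, hinl a3 ha3X⟩ := induce_adj _ _ (bicolor_adj c true a3 b (ha3 b)).symm
      exact s1.reachable.trans step3.reachable
    rintro ⟨x, hx⟩
    rcases hx with ⟨b, rfl⟩ | ⟨a, rfl, haX⟩
    · exact reach2 b
    · obtain ⟨b, hbb⟩ : ∃ b, c a b = true := by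
        by_contra hno; push_neg at hno
        exact haX (fun b => by have := hno b; simp_all)
      have s1 : ((biColorGraph c true).induce G0).Adj ⟨Sum.inl a, hinl a haX⟩
          ⟨Sum.inr b, hinr b⟩ := induce_adj _ _ (bicolor_adj c true a b hbb)
      exact s1.reachable.trans (reach2 b)
  set P : Finset (Set (α ⊕ β)) :=
    insert G0 (((YA c).toFinite.toFinset).image (fun a => ({Sum.inl a} : Set (α ⊕ β)))) with hPdef
  refine ⟨P, ⟨?_, ?_⟩, ?_⟩
  · intro S hS
    rcases Finset.mem_insert.mp hS with rfl | hS
    · exact ⟨true, hconn⟩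
    · obtain ⟨a, _, rfl⟩ := Finset.mem_image.mp hS
      exact singleton_monotree c _
  · intro x
    rcases x with a | b
    · by_cases haX : a ∈ YA c
      · refine ⟨{Sum.inl a}, ⟨Finset.mem_insert_of_mem (Finset.mem_image.mpr
          ⟨a, by simpa using haX, rfl⟩), rfl⟩, ?_⟩
        rintro S ⟨hS, hxS⟩
        rcases Finset.mem_insert.mp hS with rfl | hS
        · rcases hxS with ⟨b, hb⟩ | ⟨a', ha1, ha2⟩
          · simp at hb
          · rw [Sum.inl.injEq] at ha1; subst ha1; exact absurd haX ha2
        · obtain ⟨a', _, rfl⟩ := Finset.mem_image.mp hS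
          rw [Set.mem_singleton_iff, Sum.inl.injEq] at hxS; subst hxS; rfl
      · refine ⟨G0, ⟨Finset.mem_insert_self _ _, hinl a haX⟩, ?_⟩
        rintro S ⟨hS, hxS⟩
        rcases Finset.mem_insert.mp hS with rfl | hS
        · rfl
        · obtain ⟨a', ha', rfl⟩ := Finset.mem_image.mp hS
          rw [Set.mem_singleton_iff, Sum.inl.injEq] at hxS; subst hxS
          exact absurd (by simpa using ha') haX
    · refine ⟨G0, ⟨Finset.mem_insert_self _ _, hinr b⟩, ?_⟩
      rintro S ⟨hS, hxS⟩
      rcases Finset.mem_insert.mp hS with rfl | hS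
      · rfl
      · obtain ⟨a', _, rfl⟩ := Finset.mem_image.mp hS
        simp at hxS
  · have hG0notmem : G0 ∉ ((YA c).toFinite.toFinset).image
        (fun a => ({Sum.inl a} : Set (α ⊕ β))) := by
      intro hmem
      obtain ⟨a, _, heq⟩ := Finset.mem_image.mp hmem
      have hb := hinr b0
      rw [← heq] at hb
      simp at hb
    have hinj : Function.Injective (fun a : α => ({Sum.inl a} : Set (α ⊕ β))) := by
      intro x y hxy
      simpa using hxy
    rw [hPdef, Finset.card_insert_of_notMem hG0notmem, Finset.card_image_of_injective _ hinj,
      Set.ncard_eq_toFinset_card _ (YA c).toFinite]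


set_option maxHeartbeats 1000000 in
lemma construct_two {α β : Type*} [Fintype α] [Fintype β] (c : α → β → Bool)
    (hX : (XA c).Nonempty) (hY : (YA c).Nonempty)
    (Bi : Set β) (h1 : Bi.Nonempty) (h2 : Biᶜ.Nonempty) :
    ∃ P : Finset (Set (α ⊕ β)), IsMonoTreePartition c P ∧
      P.card = (bsetA c Biᶜ).ncard + 2 := by
  classical
  obtain ⟨a1, ha1⟩ := hX
  obtain ⟨a3, ha3⟩ := hY
  obtain ⟨b1, hb1⟩ := h1
  obtain ⟨b2, hb2⟩ := h2
  set Tb : Set (α ⊕ β) :=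
    {x | (∃ b ∈ Bi, x = Sum.inr b) ∨ ∃ a, x = Sum.inl a ∧ ∃ b ∈ Bi, c a b = true} with hTb
  set Tg : Set (α ⊕ β) :=
    {x | (∃ b ∈ Biᶜ, x = Sum.inr b) ∨
      ∃ a, x = Sum.inl a ∧ (∀ b ∈ Bi, c a b = false) ∧ ∃ b ∈ Biᶜ, c a b = false} with hTg
  have memTbl : ∀ a : α, Sum.inl a ∈ Tb ↔ ∃ b ∈ Bi, c a b = true := by
    intro a
    constructor
    · rintro (⟨b, hb, hh⟩ | ⟨a', hh, hrest⟩)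
      · exact absurd hh (by simp)
      · rw [Sum.inl.injEq] at hh; subst hh; exact hrest
    · intro hh; exact Or.inr ⟨a, rfl, hh⟩
  have memTbr : ∀ b : β, Sum.inr b ∈ Tb ↔ b ∈ Bi := by
    intro b
    constructor
    · rintro (⟨b', hb', hh⟩ | ⟨a', hh, -⟩)
      · rw [Sum.inr.injEq] at hh; subst hh; exact hb'
      · exact absurd hh (by simp)
    · intro hh; exact Or.inl ⟨b, hh, rfl⟩
  have memTgl : ∀ a : α, Sum.inl a ∈ Tg ↔
      (∀ b ∈ Bi, c a b = false) ∧ ∃ b ∈ Biᶜ, c a b = false := by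
    intro a
    constructor
    · rintro (⟨b, hb, hh⟩ | ⟨a', hh, hrest⟩)
      · exact absurd hh (by simp)
      · rw [Sum.inl.injEq] at hh; subst hh; exact hrest
    · intro hh; exact Or.inr ⟨a, rfl, hh⟩
  have memTgr : ∀ b : β, Sum.inr b ∈ Tg ↔ b ∈ Biᶜ := by
    intro b
    constructor
    · rintro (⟨b', hb', hh⟩ | ⟨a', hh, -⟩)
      · rw [Sum.inr.injEq] at hh; subst hh; exact hb'
      · exact absurd hh (by simp)
    · intro hh; exact Or.inl ⟨b, hh, rfl⟩
  have ha1b : Sum.inl a1 ∈ Tb := (memTbl a1).mpr ⟨b1, hb1, ha1 b1⟩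
  have ha3g : Sum.inl a3 ∈ Tg := (memTgl a3).mpr ⟨fun b _ => ha3 b, b2, hb2, ha3 b2⟩
  have hconnb : ((biColorGraph c true).induce Tb).Connected := by
    apply connected_of_hub _ ⟨Sum.inl a1, ha1b⟩
    rintro ⟨x, hx⟩
    rcases hx with ⟨b, hb, rfl⟩ | ⟨a, rfl, b, hb, hab⟩
    · exact (induce_adj ((memTbr b).mpr hb) ha1b
        (bicolor_adj c true a1 b (ha1 b)).symm).reachable
    · have hbB : Sum.inr b ∈ Tb := (memTbr b).mpr hb
      have hal : Sum.inl a ∈ Tb := (memTbl a).mpr ⟨b, hb, hab⟩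
      exact ((induce_adj hal hbB
        (bicolor_adj c true a b hab)).reachable).trans
        (induce_adj hbB ha1b (bicolor_adj c true a1 b (ha1 b)).symm).reachable
  have hconng : ((biColorGraph c false).induce Tg).Connected := by
    apply connected_of_hub _ ⟨Sum.inl a3, ha3g⟩
    rintro ⟨x, hx⟩
    rcases hx with ⟨b, hb, rfl⟩ | ⟨a, rfl, hall, b, hb, hab⟩
    · exact (induce_adj ((memTgr b).mpr hb) ha3g
        (bicolor_adj c false a3 b (ha3 b)).symm).reachable
    · have hbB : Sum.inr b ∈ Tg := (memTgr b).mpr hb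
      have hal : Sum.inl a ∈ Tg := (memTgl a).mpr ⟨hall, b, hb, hab⟩
      exact ((induce_adj hal hbB
        (bicolor_adj c false a b hab)).reachable).trans
        (induce_adj hbB ha3g (bicolor_adj c false a3 b (ha3 b)).symm).reachable
  set P : Finset (Set (α ⊕ β)) := insert Tb (insert Tg
    (((bsetA c Biᶜ).toFinite.toFinset).image (fun a => ({Sum.inl a} : Set (α ⊕ β))))) with hPdef
  have hbset : ∀ a ∈ bsetA c Biᶜ, (∀ b ∈ Biᶜ, c a b = true) ∧ ∀ b ∈ Bi, c a b = false := by
    intro a ha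
    exact ⟨ha.1, fun b hb => ha.2 b (not_not_intro hb)⟩
  refine ⟨P, ⟨?_, ?_⟩, ?_⟩
  · intro S hS
    rcases Finset.mem_insert.mp hS with rfl | hS
    · exact ⟨true, hconnb⟩
    rcases Finset.mem_insert.mp hS with rfl | hS
    · exact ⟨false, hconng⟩
    · obtain ⟨a, _, rfl⟩ := Finset.mem_image.mp hS
      exact singleton_monotree c _
  · intro x
    have huniq : ∀ W : Set (α ⊕ β), (W ∈ P ∧ x ∈ W) →
        ∀ S, S ∈ P ∧ x ∈ S → (∀ S', S' ∈ P → x ∈ S' → x ∈ W → S' = W) → True := fun _ _ _ _ _ => trivial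
    rcases x with a | b
    · by_cases hblue : ∃ b ∈ Bi, c a b = true
      · refine ⟨Tb, ⟨Finset.mem_insert_self _ _, (memTbl a).mpr hblue⟩, ?_⟩
        rintro S ⟨hS, hxS⟩
        rcases Finset.mem_insert.mp hS with rfl | hS
        · rfl
        rcases Finset.mem_insert.mp hS with rfl | hS
        · obtain ⟨hall, -⟩ := (memTgl a).mp hxS
          obtain ⟨b, hb, hab⟩ := hblue
          rw [hall b hb] at hab; exact absurd hab (by simp)
        · obtain ⟨a', ha', rfl⟩ := Finset.mem_image.mp hS
          rw [Set.mem_singleton_iff, Sum.inl.injEq] at hxS; subst hxS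
          obtain ⟨b, hb, hab⟩ := hblue
          have := (hbset a ((bsetA c Biᶜ).toFinite.mem_toFinset.mp ha')).2 b hb
          rw [this] at hab; exact absurd hab (by simp)
      · push_neg at hblue
        have hallBi : ∀ b ∈ Bi, c a b = false := fun b hb => by
          have := hblue b hb; simp_all
        by_cases hgreen : ∃ b ∈ Biᶜ, c a b = false
        · refine ⟨Tg, ⟨Finset.mem_insert_of_mem (Finset.mem_insert_self _ _),
            (memTgl a).mpr ⟨hallBi, hgreen⟩⟩, ?_⟩
          rintro S ⟨hS, hxS⟩
          rcases Finset.mem_insert.mp hS with rfl | hS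
          · obtain ⟨b, hb, hab⟩ := (memTbl a).mp hxS
            rw [hallBi b hb] at hab; exact absurd hab (by simp)
          rcases Finset.mem_insert.mp hS with rfl | hS
          · rfl
          · obtain ⟨a', ha', rfl⟩ := Finset.mem_image.mp hS
            rw [Set.mem_singleton_iff, Sum.inl.injEq] at hxS; subst hxS
            obtain ⟨b, hb, hab⟩ := hgreen
            have := (hbset a ((bsetA c Biᶜ).toFinite.mem_toFinset.mp ha')).1 b hb
            rw [this] at hab; exact absurd hab (by simp)
        · push_neg at hgreen
          have hallC : ∀ b ∈ Biᶜ, c a b = true := fun b hb => by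
            have := hgreen b hb; simp_all
          have habset : a ∈ bsetA c Biᶜ := ⟨hallC, fun b hb => hallBi b (not_not.mp hb)⟩
          refine ⟨{Sum.inl a}, ⟨Finset.mem_insert_of_mem (Finset.mem_insert_of_mem
            (Finset.mem_image.mpr ⟨a, (bsetA c Biᶜ).toFinite.mem_toFinset.mpr habset, rfl⟩)), rfl⟩, ?_⟩
          rintro S ⟨hS, hxS⟩
          rcases Finset.mem_insert.mp hS with rfl | hS
          · obtain ⟨b, hb, hab⟩ := (memTbl a).mp hxS
            rw [hallBi b hb] at hab; exact absurd hab (by simp)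
          rcases Finset.mem_insert.mp hS with rfl | hS
          · obtain ⟨-, b, hb, hab⟩ := (memTgl a).mp hxS
            rw [hallC b hb] at hab; exact absurd hab (by simp)
          · obtain ⟨a', _, rfl⟩ := Finset.mem_image.mp hS
            rw [Set.mem_singleton_iff, Sum.inl.injEq] at hxS; subst hxS; rfl
    · by_cases hb : b ∈ Bi
      · refine ⟨Tb, ⟨Finset.mem_insert_self _ _, (memTbr b).mpr hb⟩, ?_⟩
        rintro S ⟨hS, hxS⟩
        rcases Finset.mem_insert.mp hS with rfl | hS
        · rfl
        rcases Finset.mem_insert.mp hS with rfl | hS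
        · exact absurd ((memTgr b).mp hxS) (not_not_intro hb)
        · obtain ⟨a', _, rfl⟩ := Finset.mem_image.mp hS
          simp at hxS
      · refine ⟨Tg, ⟨Finset.mem_insert_of_mem (Finset.mem_insert_self _ _),
          (memTgr b).mpr hb⟩, ?_⟩
        rintro S ⟨hS, hxS⟩
        rcases Finset.mem_insert.mp hS with rfl | hS
        · exact absurd ((memTbr b).mp hxS) hb
        rcases Finset.mem_insert.mp hS with rfl | hS
        · rfl
        · obtain ⟨a', _, rfl⟩ := Finset.mem_image.mp hS
          simp at hxS
  · have hTgnot : Tg ∉ ((bsetA c Biᶜ).toFinite.toFinset).image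
        (fun a => ({Sum.inl a} : Set (α ⊕ β))) := by
      intro hmem
      obtain ⟨a, _, heq⟩ := Finset.mem_image.mp hmem
      have hb := (memTgr b2).mpr hb2
      rw [← heq] at hb; simp at hb
    have hTbnot : Tb ∉ insert Tg (((bsetA c Biᶜ).toFinite.toFinset).image
        (fun a => ({Sum.inl a} : Set (α ⊕ β)))) := by
      intro hmem
      rcases Finset.mem_insert.mp hmem with heq | hmem
      · have hbb := (memTbr b1).mpr hb1
        rw [heq] at hbb
        exact absurd ((memTgr b1).mp hbb) (not_not_intro hb1)
      · obtain ⟨a, _, heq⟩ := Finset.mem_image.mp hmem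
        have hbb := (memTbr b1).mpr hb1
        rw [← heq] at hbb; simp at hbb
    have hinj : Function.Injective (fun a : α => ({Sum.inl a} : Set (α ⊕ β))) := by
      intro x y hxy; simpa using hxy
    rw [hPdef, Finset.card_insert_of_notMem hTbnot, Finset.card_insert_of_notMem hTgnot,
      Finset.card_image_of_injective _ hinj, Set.ncard_eq_toFinset_card _ (bsetA c Biᶜ).toFinite]


lemma exists_adj_of_connected {W : Type*} {H : SimpleGraph W} (h : H.Connected)
    {u v : W} (hne : u ≠ v) : ∃ w, H.Adj u w := by
  obtain ⟨p⟩ := h.preconnected u v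
  exact ⟨p.getVert 1, p.adj_snd (SimpleGraph.Walk.not_nil_of_ne hne)⟩

lemma mono_neighbor {α β : Type*} {c : α → β → Bool} {k : Bool} {S : Set (α ⊕ β)}
    (hconn : ((biColorGraph c k).induce S).Connected)
    {x y : α ⊕ β} (hx : x ∈ S) (hy : y ∈ S) (hne : y ≠ x) :
    ∃ z ∈ S, (biColorGraph c k).Adj x z := by
  obtain ⟨w, hw⟩ := exists_adj_of_connected hconn (u := ⟨x, hx⟩) (v := ⟨y, hy⟩)
    (fun hh => hne (by simpa using hh.symm))
  exact ⟨w.1, w.2, hw⟩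

lemma mono_neighbor_inl {α β : Type*} {c : α → β → Bool} {k : Bool} {S : Set (α ⊕ β)}
    (hconn : ((biColorGraph c k).induce S).Connected)
    {a : α} (hx : Sum.inl a ∈ S) {y : α ⊕ β} (hy : y ∈ S) (hne : y ≠ Sum.inl a) :
    ∃ b, Sum.inr b ∈ S ∧ c a b = k := by
  obtain ⟨z, hz, hadj⟩ := mono_neighbor hconn hx hy hne
  rcases hadj with ⟨a', b', h1, h2, h3⟩ | ⟨a', b', h1, h2, h3⟩
  · cases h1; exact ⟨b', h2 ▸ hz, h3⟩
  · simp at h1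

set_option maxHeartbeats 1000000 in
lemma lower_bound {α β : Type*} [Fintype α] [Fintype β] (c : α → β → Bool) (hb : Nonempty β)
    (P : Finset (Set (α ⊕ β))) (hP : IsMonoTreePartition c P) :
    ((XA c).ncard + 1 ≤ P.card) ∨ ((YA c).ncard + 1 ≤ P.card) ∨
      ∃ Bi : Set β, Bi.Nonempty ∧ Biᶜ.Nonempty ∧ (bsetA c Bi).ncard + 2 ≤ P.card := by
  classical
  obtain ⟨hmono, huniq⟩ := hP
  let col : Set (α ⊕ β) → Bool := fun S => if h : IsMonoTreeSet c S then h.choose else true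
  have hcol : ∀ S ∈ P, ((biColorGraph c (col S)).induce S).Connected := by
    intro S hS
    have h := hmono S hS
    show ((biColorGraph c (if h' : IsMonoTreeSet c S then h'.choose else true)).induce S).Connected
    rw [dif_pos h]
    exact h.choose_spec
  let part : α ⊕ β → Set (α ⊕ β) := fun x => (huniq x).choose
  have hpmem : ∀ x, part x ∈ P := fun x => (huniq x).choose_spec.1.1
  have hpself : ∀ x, x ∈ part x := fun x => (huniq x).choose_spec.1.2
  have hpuniq : ∀ x S, S ∈ P → x ∈ S → S = part x :=
    fun x S hh1 hh2 => (huniq x).choose_spec.2 S ⟨hh1, hh2⟩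
  have hsingle : ∀ a : α,
      (∀ b, Sum.inr b ∈ part (Sum.inl a) → c a b ≠ col (part (Sum.inl a))) →
      part (Sum.inl a) = {Sum.inl a} := by
    intro a hno
    by_contra hne
    have hex : ∃ y ∈ part (Sum.inl a), y ≠ Sum.inl a := by
      by_contra hc; push_neg at hc
      exact hne (Set.eq_singleton_iff_unique_mem.mpr ⟨hpself _, hc⟩)
    obtain ⟨y, hy, hyne⟩ := hex
    obtain ⟨b, hbmem, hcab⟩ := mono_neighbor_inl (hcol _ (hpmem _)) (hpself _) hy hyne
    exact hno b hbmem hcab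
  have hinj : Function.Injective (fun a : α => ({Sum.inl a} : Set (α ⊕ β))) := by
    intro x y hxy; simpa using hxy
  set Bg : Set β := {b | col (part (Sum.inr b)) = false} with hBgdef
  by_cases h1 : Bg.Nonempty
  · by_cases h2 : Bgᶜ.Nonempty
    · refine Or.inr (Or.inr ⟨Bg, h1, h2, ?_⟩)
      obtain ⟨b1, hb1⟩ := h1
      obtain ⟨b2, hb2⟩ := h2
      have hsing : ∀ a ∈ bsetA c Bg, part (Sum.inl a) = {Sum.inl a} := by
        intro a ha
        apply hsingle
        intro b hbmem heq
        have hpe : part (Sum.inl a) = part (Sum.inr b) := hpuniq _ _ (hpmem _) hbmem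
        have hce : col (part (Sum.inr b)) = c a b := by rw [← hpe, ← heq]
        by_cases hcb : b ∈ Bg
        · have h4 : c a b = true := ha.1 b hcb
          have h3 : col (part (Sum.inr b)) = false := hcb
          rw [h4, h3] at hce; exact absurd hce (by simp)
        · have h4 : c a b = false := ha.2 b hcb
          rw [h4] at hce; exact hcb hce
      set Q : Finset (Set (α ⊕ β)) := insert (part (Sum.inr b1)) (insert (part (Sum.inr b2))
        (((bsetA c Bg).toFinite.toFinset).image (fun a => ({Sum.inl a} : Set (α ⊕ β))))) with hQdef
      have hQP : Q ⊆ P := by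
        intro S hS
        rcases Finset.mem_insert.mp hS with rfl | hS
        · exact hpmem _
        rcases Finset.mem_insert.mp hS with rfl | hS
        · exact hpmem _
        obtain ⟨a, ha, rfl⟩ := Finset.mem_image.mp hS
        rw [← hsing a ((bsetA c Bg).toFinite.mem_toFinset.mp ha)]
        exact hpmem _
      have hb2not : part (Sum.inr b2) ∉ ((bsetA c Bg).toFinite.toFinset).image
          (fun a => ({Sum.inl a} : Set (α ⊕ β))) := by
        intro hmem
        obtain ⟨a, _, heq⟩ := Finset.mem_image.mp hmem
        have := hpself (Sum.inr b2)
        rw [← heq] at this; simp at this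
      have hb1not : part (Sum.inr b1) ∉ insert (part (Sum.inr b2))
          (((bsetA c Bg).toFinite.toFinset).image (fun a => ({Sum.inl a} : Set (α ⊕ β)))) := by
        intro hmem
        rcases Finset.mem_insert.mp hmem with heq | hmem
        · have h3 : col (part (Sum.inr b1)) = false := hb1
          rw [heq] at h3
          exact hb2 h3
        · obtain ⟨a, _, heq⟩ := Finset.mem_image.mp hmem
          have := hpself (Sum.inr b1)
          rw [← heq] at this; simp at this
      have hcard : Q.card = (bsetA c Bg).ncard + 2 := by
        rw [hQdef, Finset.card_insert_of_notMem hb1not, Finset.card_insert_of_notMem hb2not,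
          Finset.card_image_of_injective _ hinj, Set.ncard_eq_toFinset_card _ (bsetA c Bg).toFinite]
      calc (bsetA c Bg).ncard + 2 = Q.card := hcard.symm
        _ ≤ P.card := Finset.card_le_card hQP
    · -- Bgᶜ empty : every part containing a B vertex is green; XA vertices singletons
      refine Or.inl ?_
      have hall : ∀ b : β, col (part (Sum.inr b)) = false := by
        intro b
        by_contra hc
        exact h2 ⟨b, hc⟩
      have hsing : ∀ a ∈ XA c, part (Sum.inl a) = {Sum.inl a} := by
        intro a ha
        apply hsingle
        intro b hbmem heq
        have hpe : part (Sum.inl a) = part (Sum.inr b) := hpuniq _ _ (hpmem _) hbmem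
        rw [ha b, hpe, hall b] at heq
        exact absurd heq (by simp)
      obtain ⟨b0, _⟩ := h1
      set Q : Finset (Set (α ⊕ β)) := insert (part (Sum.inr b0))
        (((XA c).toFinite.toFinset).image (fun a => ({Sum.inl a} : Set (α ⊕ β)))) with hQdef
      have hQP : Q ⊆ P := by
        intro S hS
        rcases Finset.mem_insert.mp hS with rfl | hS
        · exact hpmem _
        obtain ⟨a, ha, rfl⟩ := Finset.mem_image.mp hS
        rw [← hsing a ((XA c).toFinite.mem_toFinset.mp ha)]
        exact hpmem _
      have hb0not : part (Sum.inr b0) ∉ ((XA c).toFinite.toFinset).image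
          (fun a => ({Sum.inl a} : Set (α ⊕ β))) := by
        intro hmem
        obtain ⟨a, _, heq⟩ := Finset.mem_image.mp hmem
        have := hpself (Sum.inr b0)
        rw [← heq] at this; simp at this
      have hcard : Q.card = (XA c).ncard + 1 := by
        rw [hQdef, Finset.card_insert_of_notMem hb0not,
          Finset.card_image_of_injective _ hinj, Set.ncard_eq_toFinset_card _ (XA c).toFinite]
      calc (XA c).ncard + 1 = Q.card := hcard.symm
        _ ≤ P.card := Finset.card_le_card hQP
  · -- Bg empty : every part containing a B vertex is blue; YA vertices singletons
    refine Or.inr (Or.inl ?_)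
    have hall : ∀ b : β, col (part (Sum.inr b)) = true := by
      intro b
      have hnb : b ∉ Bg := fun hh => h1 ⟨b, hh⟩
      cases hcv : col (part (Sum.inr b)) with
      | false => exact absurd hcv hnb
      | true => rfl
    have hsing : ∀ a ∈ YA c, part (Sum.inl a) = {Sum.inl a} := by
      intro a ha
      apply hsingle
      intro b hbmem heq
      have hpe : part (Sum.inl a) = part (Sum.inr b) := hpuniq _ _ (hpmem _) hbmem
      rw [ha b, hpe, hall b] at heq
      exact absurd heq (by simp)
    obtain ⟨b0⟩ := hb
    set Q : Finset (Set (α ⊕ β)) := insert (part (Sum.inr b0))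
      (((YA c).toFinite.toFinset).image (fun a => ({Sum.inl a} : Set (α ⊕ β)))) with hQdef
    have hQP : Q ⊆ P := by
      intro S hS
      rcases Finset.mem_insert.mp hS with rfl | hS
      · exact hpmem _
      obtain ⟨a, ha, rfl⟩ := Finset.mem_image.mp hS
      rw [← hsing a ((YA c).toFinite.mem_toFinset.mp ha)]
      exact hpmem _
    have hb0not : part (Sum.inr b0) ∉ ((YA c).toFinite.toFinset).image
        (fun a => ({Sum.inl a} : Set (α ⊕ β))) := by
      intro hmem
      obtain ⟨a, _, heq⟩ := Finset.mem_image.mp hmem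
      have := hpself (Sum.inr b0)
      rw [← heq] at this; simp at this
    have hcard : Q.card = (YA c).ncard + 1 := by
      rw [hQdef, Finset.card_insert_of_notMem hb0not,
        Finset.card_image_of_injective _ hinj, Set.ncard_eq_toFinset_card _ (YA c).toFinite]
    calc (YA c).ncard + 1 = Q.card := hcard.symm
      _ ≤ P.card := Finset.card_le_card hQP


end S1Helpers

/-- If a 2-edge-colored complete bipartite graph `K(A,B)` is an `S1`-type
graph with `X(G) ∪ Y(G) ⊆ A` (writing `A = A1 ∪ A2 ∪ A3`), then its vertex set can be
partitioned into exactly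
`min {|A1| + 1, |A3| + 1, min_i |b(Bi)| + 2, min_i |b(B̄i)| + 2}`
vertex-disjoint monochromatic trees (the inner minima over all partitions `B = Bi ∪ B̄i`
into nonempty parts), and no partition into fewer vertex-disjoint monochromatic trees
exists. -/
theorem s1type_exact_partition_number {α β : Type*} [Fintype α] [Fintype β]
    (c : α → β → Bool) (h : IsS1StarA c ∨ IsS1PrimeA c) :
    (∃ P : Finset (Set (α ⊕ β)), IsMonoTreePartition c P ∧
      P.card = sInf (({(XA c).ncard + 1, (YA c).ncard + 1} : Set ℕ) ∪
        {n : ℕ | ∃ Bi : Set β, Bi.Nonempty ∧ Biᶜ.Nonempty ∧ n = (bsetA c Bi).ncard + 2} ∪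
        {n : ℕ | ∃ Bi : Set β, Bi.Nonempty ∧ Biᶜ.Nonempty ∧ n = (bsetA c Biᶜ).ncard + 2})) ∧
    ∀ P : Finset (Set (α ⊕ β)), IsMonoTreePartition c P →
      sInf (({(XA c).ncard + 1, (YA c).ncard + 1} : Set ℕ) ∪
        {n : ℕ | ∃ Bi : Set β, Bi.Nonempty ∧ Biᶜ.Nonempty ∧ n = (bsetA c Bi).ncard + 2} ∪
        {n : ℕ | ∃ Bi : Set β, Bi.Nonempty ∧ Biᶜ.Nonempty ∧ n = (bsetA c Biᶜ).ncard + 2})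
      ≤ P.card := by
  classical
  set T : Set ℕ := ({(XA c).ncard + 1, (YA c).ncard + 1} : Set ℕ) ∪
      {n : ℕ | ∃ Bi : Set β, Bi.Nonempty ∧ Biᶜ.Nonempty ∧ n = (bsetA c Bi).ncard + 2} ∪
      {n : ℕ | ∃ Bi : Set β, Bi.Nonempty ∧ Biᶜ.Nonempty ∧ n = (bsetA c Biᶜ).ncard + 2} with hT
  have hX : (XA c).Nonempty := by
    apply Set.nonempty_of_ncard_ne_zero
    rcases h with h | h
    · have := h.2.1; omega
    · have := h.1; omega
  have hY : (YA c).Nonempty := by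
    apply Set.nonempty_of_ncard_ne_zero
    rcases h with h | h
    · have := h.2.2; omega
    · have := h.2.1; omega
  have hbne : Nonempty β := by
    apply Fintype.card_pos_iff.mp
    rcases h with h | h
    · rw [h.1]; norm_num
    · have := h.2.2.1; omega
  have hTmem1 : (XA c).ncard + 1 ∈ T := Or.inl (Or.inl (Or.inl rfl))
  have hTmem2 : (YA c).ncard + 1 ∈ T := Or.inl (Or.inl (Or.inr rfl))
  have hTne : T.Nonempty := ⟨_, hTmem1⟩
  have hlow : ∀ P : Finset (Set (α ⊕ β)), IsMonoTreePartition c P → sInf T ≤ P.card := by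
    intro P hPp
    rcases lower_bound c hbne P hPp with hc | hc | ⟨Bi, hB1, hB2, hc⟩
    · exact le_trans (Nat.sInf_le hTmem1) hc
    · exact le_trans (Nat.sInf_le hTmem2) hc
    · exact le_trans (Nat.sInf_le (Or.inl (Or.inr ⟨Bi, hB1, hB2, rfl⟩))) hc
  have hup : ∃ P : Finset (Set (α ⊕ β)), IsMonoTreePartition c P ∧ P.card = sInf T := by
    have hmem := Nat.sInf_mem hTne
    rw [hT] at hmem
    simp only [Set.mem_union, Set.mem_insert_iff, Set.mem_singleton_iff,
      Set.mem_setOf_eq] at hmem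
    rcases hmem with ((hm | hm) | ⟨Bi, hB1, hB2, hm⟩) | ⟨Bi, hB1, hB2, hm⟩
    · obtain ⟨P, hp1, hp2⟩ := construct_green c hbne hY
      exact ⟨P, hp1, by rw [hm]; exact hp2⟩
    · obtain ⟨P, hp1, hp2⟩ := construct_blue c hbne hX
      exact ⟨P, hp1, by rw [hm]; exact hp2⟩
    · obtain ⟨P, hp1, hp2⟩ := construct_two c hX hY Biᶜ hB2 (by rwa [compl_compl])
      rw [compl_compl] at hp2
      exact ⟨P, hp1, by rw [hm]; exact hp2⟩
    · obtain ⟨P, hp1, hp2⟩ := construct_two c hX hY Bi hB1 hB2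
      exact ⟨P, hp1, by rw [hm]; exact hp2⟩
  obtain ⟨P, hp1, hp2⟩ := hup
  exact ⟨⟨P, hp1, hp2⟩, hlow⟩
end
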